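/- arXiv:math/0603098 — 8 statements merged into one kernel-verified Lean document; each statement's English description precedes it below -/
import Mathlib

section
/- Let A be an n×n upper triangular complex matrix with ‖A‖ ≤ 1 and 1 ∉ spec(A). Then for all indices k, ℓ: |((I − A)⁻¹)_{kℓ}| · dist(1, spec(A)) ≤ 2 if k < ℓ, ≤ 1 if k = ℓ, and ((I − A)⁻¹)_{kℓ} = 0 if k > ℓ. -/
open Matrix
open scoped ComplexOrder

noncomputable def opN {n : ℕ} (A : Matrix (Fin n) (Fin n) ℂ) : ℝ :=
  ‖Matrix.toEuclideanCLM (𝕜 := ℂ) A‖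

lemma aux_psd_one_sub {n : ℕ} (A : Matrix (Fin n) (Fin n) ℂ)
    (hA : opN A ≤ 1) :
    (1 - Aᴴ * A).PosSemidef := by
  replace hA : ‖Matrix.toEuclideanCLM (𝕜 := ℂ) A‖ ≤ 1 := hA
  refine Matrix.PosSemidef.of_dotProduct_mulVec_nonneg ?_ ?_
  · simp [Matrix.IsHermitian, Matrix.conjTranspose_sub, Matrix.conjTranspose_mul]
  · intro x
    set y : EuclideanSpace ℂ (Fin n) := (WithLp.equiv 2 _).symm x with hy
    have key : star x ⬝ᵥ ((1 - Aᴴ * A) *ᵥ x)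
        = ((‖y‖ ^ 2 - ‖Matrix.toEuclideanCLM (𝕜 := ℂ) A y‖ ^ 2 : ℝ) : ℂ) := by
      have h1 : star x ⬝ᵥ ((1 - Aᴴ * A) *ᵥ x)
          = star x ⬝ᵥ x - star (A *ᵥ x) ⬝ᵥ (A *ᵥ x) := by
        rw [Matrix.sub_mulVec, dotProduct_sub, Matrix.one_mulVec,
          ← Matrix.mulVec_mulVec, Matrix.dotProduct_mulVec, star_mulVec]
      rw [h1]
      have h2 : star x ⬝ᵥ x = (inner ℂ y y : ℂ) := by
        rw [hy]; exact dotProduct_comm _ _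
      have h3 : star (A *ᵥ x) ⬝ᵥ (A *ᵥ x)
          = (inner ℂ (Matrix.toEuclideanCLM (𝕜 := ℂ) A y) (Matrix.toEuclideanCLM (𝕜 := ℂ) A y) : ℂ) := by
        rw [hy]; exact dotProduct_comm _ _
      rw [h2, h3, inner_self_eq_norm_sq_to_K, inner_self_eq_norm_sq_to_K]
      push_cast
      rfl
    rw [key, Complex.zero_le_real]
    have hn : ‖Matrix.toEuclideanCLM (𝕜 := ℂ) A y‖ ≤ ‖y‖ := by
      calc ‖Matrix.toEuclideanCLM (𝕜 := ℂ) A y‖ ≤ ‖Matrix.toEuclideanCLM (𝕜 := ℂ) A‖ * ‖y‖ :=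
        ContinuousLinearMap.le_opNorm _ _
      _ ≤ 1 * ‖y‖ := by gcongr
      _ = ‖y‖ := one_mul _
    nlinarith [norm_nonneg y, norm_nonneg (Matrix.toEuclideanCLM (𝕜 := ℂ) A y)]

lemma aux_psd_entry {n : ℕ} {P : Matrix (Fin n) (Fin n) ℂ} (hP : P.PosSemidef)
    (k ℓ : Fin n) (_hkl : k ≠ ℓ) :
    2 * ‖P k ℓ‖ ≤ (P k k).re + (P ℓ ℓ).re := by
  have hdiag : ∀ j, 0 ≤ (P j j).re := by
    intro j
    have h := hP.dotProduct_mulVec_nonneg (Pi.single j 1 : Fin n → ℂ)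
    have e : star (Pi.single j 1 : Fin n → ℂ) ⬝ᵥ (P *ᵥ (Pi.single j 1 : Fin n → ℂ)) = P j j := by
      have hs : star (Pi.single j 1 : Fin n → ℂ) = (Pi.single j 1 : Fin n → ℂ) := by
        funext i; simp [Pi.single_apply, apply_ite (star : ℂ → ℂ)]
      rw [Matrix.mulVec_single, hs, single_dotProduct]; simp
    rw [e] at h
    exact (Complex.le_def.mp h).1
  by_cases h0 : P k ℓ = 0
  · simp only [h0, map_zero, norm_zero, mul_zero]
    have := hdiag k; have := hdiag ℓ; linarith
  set a : ℝ := ‖P k ℓ‖ with ha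
  have ha0 : 0 < a := by rw [ha]; exact norm_pos_iff.mpr h0
  set c : ℂ := -(a : ℂ) / P k ℓ with hc
  have hc1 : P k ℓ * c = -(a : ℂ) := by rw [hc, mul_div_assoc', mul_div_cancel_left₀ _ h0]
  have habs : ‖c‖ = 1 := by
    rw [hc, norm_div, norm_neg, Complex.norm_real, Real.norm_eq_abs, abs_of_pos ha0, ← ha, div_self ha0.ne']
  have hc2 : (starRingEnd ℂ) c * c = 1 := by
    rw [mul_comm, Complex.mul_conj, Complex.normSq_eq_norm_sq, habs]; norm_num
  set x : Fin n → ℂ := Pi.single k 1 + Pi.single ℓ c with hx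
  have h := hP.dotProduct_mulVec_nonneg x
  have hstar : star x = Pi.single k 1 + Pi.single ℓ ((starRingEnd ℂ) c) := by
    funext i; simp [hx, Pi.single_apply, apply_ite (star : ℂ → ℂ)]
  have hherm : P ℓ k = (starRingEnd ℂ) (P k ℓ) := by
    have := congrFun (congrFun hP.1 ℓ) k
    simpa [Matrix.conjTranspose_apply] using this.symm
  have hval : star x ⬝ᵥ (P *ᵥ x) = P k k + P ℓ ℓ - 2 * (a : ℂ) := by
    rw [hstar, hx, Matrix.mulVec_add, Matrix.mulVec_single, Matrix.mulVec_single,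
      add_dotProduct, single_dotProduct, single_dotProduct]
    simp only [Pi.add_apply, Pi.smul_apply, Matrix.col_apply, MulOpposite.smul_eq_mul_unop,
      MulOpposite.unop_op]
    rw [hherm]
    have e2 : (starRingEnd ℂ) c * ((starRingEnd ℂ) (P k ℓ) * 1 + P ℓ ℓ * c)
        = (starRingEnd ℂ) (P k ℓ * c) + P ℓ ℓ * ((starRingEnd ℂ) c * c) := by
      simp only [_root_.map_mul]; ring
    rw [e2, hc1, hc2]
    have e3 : (starRingEnd ℂ) (-(a:ℂ)) = -(a:ℂ) := by
      simp [Complex.conj_ofReal]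
    rw [e3]
    ring
  rw [hval] at h
  have h0' := (Complex.le_def.mp h).1
  simp only [Complex.sub_re, Complex.add_re, Complex.zero_re, Complex.mul_re,
    Complex.ofReal_re, Complex.ofReal_im, Complex.re_ofNat, Complex.im_ofNat] at h0'
  linarith

theorem stmt1 {n : ℕ} (A : Matrix (Fin n) (Fin n) ℂ)
    (htri : ∀ k ℓ : Fin n, ℓ < k → A k ℓ = 0)
    (hA : opN A ≤ 1) (h1 : (1 : ℂ) ∉ spectrum ℂ A) :
    ∀ k ℓ : Fin n,
      (k < ℓ → ‖((1 - A)⁻¹) k ℓ‖ * Metric.infDist 1 (spectrum ℂ A) ≤ 2) ∧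
      (k = ℓ → ‖((1 - A)⁻¹) k ℓ‖ * Metric.infDist 1 (spectrum ℂ A) ≤ 1) ∧
      (ℓ < k → ((1 - A)⁻¹) k ℓ = 0) := by
  intro k ℓ
  set M : Matrix (Fin n) (Fin n) ℂ := 1 - A with hM
  have hAtri : A.BlockTriangular id := fun i j hij => htri i j hij
  have hMtri : M.BlockTriangular id := Matrix.blockTriangular_one.sub hAtri
  have hUnit : IsUnit M := by
    have := spectrum.notMem_iff.mp h1
    rwa [_root_.map_one] at this
  haveI : Invertible M := hUnit.invertible
  have hBtri : M⁻¹.BlockTriangular id := Matrix.blockTriangular_inv_of_blockTriangular hMtri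
  have hspec : ∀ j : Fin n, A j j ∈ spectrum ℂ A := by
    intro j
    rw [spectrum.mem_iff]
    intro hu
    have hdet := (Matrix.isUnit_iff_isUnit_det _).mp hu
    have htr : (algebraMap ℂ (Matrix (Fin n) (Fin n) ℂ) (A j j) - A).BlockTriangular id := by
      rw [Matrix.algebraMap_eq_diagonal]
      exact (Matrix.blockTriangular_diagonal _).sub hAtri
    rw [Matrix.det_of_upperTriangular htr] at hdet
    have hz : ∏ i, (algebraMap ℂ (Matrix (Fin n) (Fin n) ℂ) (A j j) - A) i i = 0 := by
      apply Finset.prod_eq_zero (Finset.mem_univ j)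
      simp [Matrix.sub_apply, Matrix.algebraMap_matrix_apply]
    rw [hz] at hdet
    simp at hdet
  have hne : ∀ j : Fin n, A j j ≠ 1 := fun j hj => h1 (hj ▸ hspec j)
  set d := Metric.infDist (1:ℂ) (spectrum ℂ A) with hd
  have hd0 : 0 ≤ d := Metric.infDist_nonneg
  have hdle : ∀ j : Fin n, d ≤ ‖1 - A j j‖ := by
    intro j
    have := Metric.infDist_le_dist_of_mem (x := (1:ℂ)) (hspec j)
    rwa [Complex.dist_eq] at this
  have hdiagB : ∀ j : Fin n, M⁻¹ j j = (1 - A j j)⁻¹ := by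
    intro j
    have e : (M * M⁻¹) j j = 1 := by rw [Matrix.mul_inv_of_invertible]; simp
    rw [Matrix.mul_apply] at e
    have e2 : ∀ i ∈ Finset.univ, i ≠ j → M j i * M⁻¹ i j = 0 := by
      intro i _ hij
      rcases lt_or_gt_of_ne hij with h | h
      · rw [hMtri h, zero_mul]
      · rw [hBtri h, mul_zero]
    rw [Finset.sum_eq_single j e2 (by simp)] at e
    have hMjj : M j j = 1 - A j j := by simp [hM]
    rw [hMjj] at e
    exact eq_inv_of_mul_eq_one_left (by rw [mul_comm]; exact e)
  have hdiagbound : ∀ j : Fin n, ‖M⁻¹ j j‖ * d ≤ 1 := by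
    intro j
    rw [hdiagB j, norm_inv]
    have ha : 0 < ‖1 - A j j‖ := by
      apply norm_pos_iff.mpr
      intro hz
      exact hne j (by rwa [sub_eq_zero, eq_comm] at hz)
    calc (‖1 - A j j‖)⁻¹ * d
        ≤ (‖1 - A j j‖)⁻¹ * ‖1 - A j j‖ := by
          gcongr
          exact hdle j
      _ = 1 := inv_mul_cancel₀ ha.ne'
  set B := M⁻¹ with hB
  have e1 : M * B = 1 := Matrix.mul_inv_of_invertible M
  have e3 : Bᴴ * Mᴴ = 1 := by rw [← Matrix.conjTranspose_mul, e1, Matrix.conjTranspose_one]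
  have hQ : (1 : Matrix (Fin n) (Fin n) ℂ) - Aᴴ * A = M + Mᴴ - Mᴴ * M := by
    rw [hM, Matrix.conjTranspose_sub, Matrix.conjTranspose_one]
    noncomm_ring
  have hPSD : (B + Bᴴ - 1 : Matrix (Fin n) (Fin n) ℂ).PosSemidef := by
    have h0 := (aux_psd_one_sub A hA).conjTranspose_mul_mul_same B
    have heq : Bᴴ * (1 - Aᴴ * A) * B = B + Bᴴ - 1 := by
      rw [hQ]
      have expand : Bᴴ * (M + Mᴴ - Mᴴ * M) * B
          = Bᴴ * (M * B) + (Bᴴ * Mᴴ) * B - (Bᴴ * Mᴴ) * (M * B) := by noncomm_ring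
      rw [expand, e1, e3, Matrix.mul_one, Matrix.one_mul, Matrix.mul_one]
      abel
    rwa [heq] at h0
  refine ⟨?_, ?_, ?_⟩
  · intro hkl
    have hBlk : B ℓ k = 0 := hBtri hkl
    have hPkl : (B + Bᴴ - 1 : Matrix (Fin n) (Fin n) ℂ) k ℓ = B k ℓ := by
      simp [Matrix.sub_apply, Matrix.add_apply, Matrix.conjTranspose_apply, hBlk,
        Matrix.one_apply_ne (ne_of_lt hkl)]
    have hent := aux_psd_entry hPSD k ℓ (ne_of_lt hkl)
    rw [hPkl] at hent
    have hPd : ∀ j : Fin n, ((B + Bᴴ - 1 : Matrix (Fin n) (Fin n) ℂ) j j).re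
        = 2 * (B j j).re - 1 := by
      intro j
      simp [Matrix.sub_apply, Matrix.add_apply, Matrix.conjTranspose_apply, Matrix.one_apply_eq,
        Complex.add_re, Complex.conj_re]
      ring
    have hpk : ((B + Bᴴ - 1 : Matrix (Fin n) (Fin n) ℂ) k k).re ≤ 2 * ‖B k k‖ := by
      rw [hPd k]
      have := Complex.re_le_norm (B k k)
      linarith
    have hpl : ((B + Bᴴ - 1 : Matrix (Fin n) (Fin n) ℂ) ℓ ℓ).re ≤ 2 * ‖B ℓ ℓ‖ := by
      rw [hPd ℓ]
      have := Complex.re_le_norm (B ℓ ℓ)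
      linarith
    have hk1 := hdiagbound k
    have hl1 := hdiagbound ℓ
    have m1 := mul_le_mul_of_nonneg_right hent hd0
    have m2 := mul_le_mul_of_nonneg_right hpk hd0
    have m3 := mul_le_mul_of_nonneg_right hpl hd0
    nlinarith [m1, m2, m3, hk1, hl1]
  · intro hkl
    subst hkl
    exact hdiagbound k
  · intro hlk
    exact hBtri hlk
end

section
/- Let A be an n×n upper triangular matrix with ‖A‖ ≤ 1 and 1 ∉ spec(A). Define C = (I − A)⁻¹ + (I − A*)⁻¹ − I. Then C is positive semidefinite. -/
open scoped Matrix ComplexOrder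

theorem stmt2 {n : ℕ} (A : Matrix (Fin n) (Fin n) ℂ)
    (htri : ∀ k ℓ : Fin n, ℓ < k → A k ℓ = 0)
    (hA : opN A ≤ 1) (h1 : (1 : ℂ) ∉ spectrum ℂ A) :
    Matrix.PosSemidef ((1 - A)⁻¹ + (1 - Aᴴ)⁻¹ - 1) := by
  have hU : IsUnit ((1 : Matrix (Fin n) (Fin n) ℂ) - A) := by
    simpa using spectrum.notMem_iff.mp h1
  have hdet : IsUnit ((1 : Matrix (Fin n) (Fin n) ℂ) - A).det :=
    (Matrix.isUnit_iff_isUnit_det _).mp hU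
  set B : Matrix (Fin n) (Fin n) ℂ := 1 - A with hB
  set D : Matrix (Fin n) (Fin n) ℂ := B⁻¹ with hD
  have e2 : B * D = 1 := Matrix.mul_nonsing_inv _ hdet
  have e1 : Dᴴ * Bᴴ = 1 := by
    rw [← Matrix.conjTranspose_mul, e2, Matrix.conjTranspose_one]
  have hBH : (1 : Matrix (Fin n) (Fin n) ℂ) - Aᴴ = Bᴴ := by
    rw [hB, Matrix.conjTranspose_sub, Matrix.conjTranspose_one]
  have hct : (1 - Aᴴ)⁻¹ = Dᴴ := by
    rw [hBH, hD, ← Matrix.conjTranspose_nonsing_inv]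
  have expand : (1 : Matrix (Fin n) (Fin n) ℂ) - Aᴴ * A = Bᴴ + B - Bᴴ * B := by
    rw [hB, Matrix.conjTranspose_sub, Matrix.conjTranspose_one]
    noncomm_ring
  have key : Dᴴ * ((1 : Matrix (Fin n) (Fin n) ℂ) - Aᴴ * A) * D = D + Dᴴ - 1 := by
    rw [expand]
    calc Dᴴ * (Bᴴ + B - Bᴴ * B) * D
        = Dᴴ * Bᴴ * D + Dᴴ * (B * D) - (Dᴴ * Bᴴ) * (B * D) := by noncomm_ring
      _ = D + Dᴴ - 1 := by rw [e1, e2]; simp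
  have hps : Matrix.PosSemidef ((1 : Matrix (Fin n) (Fin n) ℂ) - Aᴴ * A) := by
    refine Matrix.PosSemidef.of_dotProduct_mulVec_nonneg ?_ ?_
    · simp [Matrix.IsHermitian, Matrix.conjTranspose_sub, Matrix.conjTranspose_mul]
    · intro x
      have hx : dotProduct (star x) (((1 : Matrix (Fin n) (Fin n) ℂ) - Aᴴ * A) *ᵥ x)
          = dotProduct (star x) x
            - dotProduct (star (A *ᵥ x)) (A *ᵥ x) := by
        rw [Matrix.sub_mulVec, dotProduct_sub, Matrix.one_mulVec,
          ← Matrix.mulVec_mulVec, Matrix.dotProduct_mulVec, ← Matrix.star_mulVec]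
      have hxy : dotProduct (star x) x
          = ((‖(WithLp.equiv 2 (Fin n → ℂ)).symm x‖ : ℝ) : ℂ) ^ 2 := by
        rw [dotProduct_comm, ← EuclideanSpace.inner_toLp_toLp, inner_self_eq_norm_sq_to_K]; norm_num
      have hzz : dotProduct (star (A *ᵥ x)) (A *ᵥ x)
          = ((‖(WithLp.equiv 2 (Fin n → ℂ)).symm (A *ᵥ x)‖ : ℝ) : ℂ) ^ 2 := by
        rw [dotProduct_comm, ← EuclideanSpace.inner_toLp_toLp, inner_self_eq_norm_sq_to_K]; norm_num
      set ny : ℝ := ‖(WithLp.equiv 2 (Fin n → ℂ)).symm x‖ with hny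
      set nz : ℝ := ‖(WithLp.equiv 2 (Fin n → ℂ)).symm (A *ᵥ x)‖ with hnz
      have hzy : nz ≤ ny := by
        have h' : Matrix.toEuclideanCLM (𝕜 := ℂ) A ((WithLp.equiv 2 (Fin n → ℂ)).symm x)
            = (WithLp.equiv 2 (Fin n → ℂ)).symm (A *ᵥ x) := by
          exact Matrix.toEuclideanCLM_toLp A x
        have hle := (Matrix.toEuclideanCLM (𝕜 := ℂ) A).le_opNorm
          ((WithLp.equiv 2 (Fin n → ℂ)).symm x)
        rw [h'] at hle
        calc nz ≤ opN A * ny := hle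
          _ ≤ 1 * ny := mul_le_mul_of_nonneg_right hA (norm_nonneg _)
          _ = ny := one_mul _
      rw [hx, hxy, hzz]
      have h0 : (0:ℝ) ≤ ny ^ 2 - nz ^ 2 := by nlinarith [norm_nonneg ((WithLp.equiv 2 (Fin n → ℂ)).symm (A *ᵥ x))]
      have hc : ((ny:ℂ)) ^ 2 - ((nz:ℂ)) ^ 2 = ((ny ^ 2 - nz ^ 2 : ℝ) : ℂ) := by push_cast; ring
      rw [hc]
      exact_mod_cast h0
  have hrw : (1 - A)⁻¹ + (1 - Aᴴ)⁻¹ - 1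
      = Dᴴ * ((1 : Matrix (Fin n) (Fin n) ℂ) - Aᴴ * A) * D := by
    rw [hct, key, hD, hB]
  rw [hrw]
  simpa using hps.conjTranspose_mul_mul_same D
end

section
/- Let Mₙ be the n×n matrix with entries (Mₙ)_{kℓ} = 2 if k < ℓ, 1 if k = ℓ, 0 if k > ℓ. Then the operator norm of Mₙ equals cot(π/(4n)). -/
open Real Finset

lemma amgm (u v : ℂ) (t : ℝ) (ht : 0 < t) :
    2 * (u * (starRingEnd ℂ) v).re ≤ t * Complex.normSq u + Complex.normSq v / t := by
  rw [Complex.normSq_apply, Complex.normSq_apply, Complex.mul_re, Complex.conj_re, Complex.conj_im,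
    ← sub_le_iff_le_add', le_div_iff₀ ht]
  nlinarith [sq_nonneg (t * u.re - v.re), sq_nonneg (t * u.im - v.im)]

lemma rec_id (x θ : ℝ) : Real.sin (x + θ) + Real.sin (x - θ) = 2 * Real.sin x * Real.cos θ := by
  rw [Real.sin_add, Real.sin_sub]; ring

lemma cross_bound {n : ℕ} (hn : 0 < n) (y : ℕ → ℂ) (hy : y n = 0) :
    2 * ∑ k ∈ range n, (y k * (starRingEnd ℂ) (y (k+1))).re
      ≤ Real.cos (π/(2*n)) * ∑ k ∈ range n, (Complex.normSq (y k) + Complex.normSq (y (k+1))) := by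
  set θ := π/(2*(n:ℝ)) with hθdef
  have hnne : (n:ℝ) ≠ 0 := Nat.cast_ne_zero.mpr hn.ne'
  have hθpos : 0 < θ := by
    have : (0:ℝ) < n := Nat.cast_pos.mpr hn
    positivity
  have hnθ : (n:ℝ) * θ = π/2 := by rw [hθdef]; field_simp
  set w : ℕ → ℝ := fun k => Real.sin (((n:ℝ) - k) * θ) with hwdef
  have hwpos : ∀ k, k < n → 0 < w k := by
    intro k hk
    apply Real.sin_pos_of_pos_of_lt_pi
    · have h1 : (1:ℝ) ≤ (n:ℝ) - k := by
        have : (k:ℝ) + 1 ≤ n := by exact_mod_cast hk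
        linarith
      nlinarith
    · have h2 : ((n:ℝ) - k) * θ ≤ (n:ℝ) * θ := by
        have : (0:ℝ) ≤ k := Nat.cast_nonneg k
        nlinarith
      have := Real.pi_pos
      rw [hnθ] at h2; linarith
  have hw0 : w 0 = 1 := by
    simp only [hwdef, Nat.cast_zero, sub_zero, hnθ]
    exact Real.sin_pi_div_two
  have hw1 : w 1 = Real.cos θ := by
    have : ((n:ℝ) - 1) * θ = π/2 - θ := by rw [← hnθ]; ring
    simp only [hwdef, Nat.cast_one, this]
    exact Real.sin_pi_div_two_sub θ
  have hwn : w n = 0 := by simp [hwdef]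
  have hrec : ∀ k : ℕ, w k + w (k+2) = 2 * Real.cos θ * w (k+1) := by
    intro k
    have e1 : ((n:ℝ) - k) * θ = ((n:ℝ) - (k+1)) * θ + θ := by push_cast; ring
    have e2 : ((n:ℝ) - (k+2)) * θ = ((n:ℝ) - (k+1)) * θ - θ := by push_cast; ring
    simp only [hwdef]
    push_cast
    rw [show ((n:ℝ) - (k:ℝ)) * θ = ((n:ℝ) - ((k:ℝ) + 1)) * θ + θ from by ring,
      show ((n:ℝ) - ((k:ℝ) + 2)) * θ = ((n:ℝ) - ((k:ℝ) + 1)) * θ - θ from by ring,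
      rec_id]
    ring
  -- abbreviations
  set c := Real.cos θ with hcdef
  have hcnn : 0 ≤ c := by
    apply Real.cos_nonneg_of_mem_Icc
    constructor
    · linarith [Real.pi_pos]
    · calc θ = 1 * θ := (one_mul θ).symm
        _ ≤ (n:ℝ) * θ := by
            have h1 : (1:ℝ) ≤ (n:ℝ) := by exact_mod_cast hn
            nlinarith
        _ = π/2 := hnθ
  set a : ℕ → ℝ := fun k => Complex.normSq (y k) with hadef
  set r : ℕ → ℝ := fun k => (y k * (starRingEnd ℂ) (y (k+1))).re with hrdef
  obtain ⟨m, rfl⟩ : ∃ m, n = m + 1 := ⟨n - 1, (Nat.succ_pred_eq_of_pos hn).symm⟩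
  have hrlast : r m = 0 := by simp [hrdef, hy]
  have hanlast : a (m+1) = 0 := by simp [hadef, hy]
  have hsumr : ∑ k ∈ range (m+1), r k = ∑ k ∈ range m, r k := by
    rw [Finset.sum_range_succ, hrlast, add_zero]
  -- termwise AM-GM
  have hterm : ∀ k ∈ range m, 2 * r k ≤ (w (k+1)/w k) * a k + (w k/w (k+1)) * a (k+1) := by
    intro k hk
    rw [Finset.mem_range] at hk
    have hk1 : k < m + 1 := by omega
    have hk2 : k + 1 < m + 1 := by omega
    have h1 := hwpos k hk1
    have h2 := hwpos (k+1) hk2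
    have ht : 0 < w (k+1)/w k := div_pos h2 h1
    have := amgm (y k) (y (k+1)) _ ht
    have heq : Complex.normSq (y (k+1)) / (w (k+1)/w k) = (w k / w (k+1)) * Complex.normSq (y (k+1)) := by
      field_simp
    rw [heq] at this
    exact this
  -- telescoping identity
  set F : ℕ → ℝ := fun j => ((c * w j - w (j+1))/w j) * a j with hFdef
  have htel : ∀ k ∈ range m,
      (w (k+1)/w k) * a k + (w k/w (k+1)) * a (k+1) - c * (a k + a (k+1)) = F (k+1) - F k := by
    intro k hk
    rw [Finset.mem_range] at hk
    have h1 := (hwpos k (by omega)).ne'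
    have h2 := (hwpos (k+1) (by omega)).ne'
    have hr := hrec k
    simp only [hFdef]
    field_simp
    have hr2 : w k + w (k+1+1) = 2 * c * w (k+1) := hr
    linear_combination w k * a (k+1) * hr2
  have hsum_tel : ∑ k ∈ range m, ((w (k+1)/w k) * a k + (w k/w (k+1)) * a (k+1))
      = c * ∑ k ∈ range m, (a k + a (k+1)) + c * a m := by
    have h1 : ∑ k ∈ range m, ((w (k+1)/w k) * a k + (w k/w (k+1)) * a (k+1) - c * (a k + a (k+1)))
        = F m - F 0 := by
      rw [Finset.sum_congr rfl htel]
      exact Finset.sum_range_sub F m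
    have hF0 : F 0 = 0 := by
      simp only [hFdef, hw0, hw1, hcdef]
      simp
    have hFm : F m = c * a m := by
      simp only [hFdef]
      rw [show w (m+1) = 0 from hwn]
      have := (hwpos m (by omega)).ne'
      field_simp
      ring
    rw [Finset.sum_sub_distrib, hF0, hFm, sub_zero] at h1
    rw [Finset.mul_sum]
    linarith [h1]
  calc 2 * ∑ k ∈ range (m+1), r k = 2 * ∑ k ∈ range m, r k := by rw [hsumr]
    _ = ∑ k ∈ range m, 2 * r k := by rw [Finset.mul_sum]
    _ ≤ ∑ k ∈ range m, ((w (k+1)/w k) * a k + (w k/w (k+1)) * a (k+1)) := Finset.sum_le_sum hterm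
    _ = c * ∑ k ∈ range m, (a k + a (k+1)) + c * a m := hsum_tel
    _ = c * ∑ k ∈ range (m+1), (a k + a (k+1)) := by
        rw [Finset.sum_range_succ, hanlast]
        ring


lemma trig_id (A θ : ℝ) :
    Real.cos θ * (Real.sin A ^ 2 + Real.sin (A - θ) ^ 2) - 2 * Real.sin A * Real.sin (A - θ)
      = Real.sin θ / 2 * (Real.sin (2*A) - Real.sin (2*(A - θ))) := by
  rw [Real.sin_two_mul, Real.sin_two_mul, Real.sin_sub, Real.cos_sub]
  linear_combination (Real.sin A ^2 * Real.cos θ - Real.sin A * Real.cos A * Real.sin θ) * (Real.sin_sq_add_cos_sq θ)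

-- facts about γ = cot(π/(4n))
lemma gamma_facts {n : ℕ} (hn : 0 < n) :
    0 < Real.cot (π/(4*n)) ∧
    (Real.cot (π/(4*n)))^2 - 1 = Real.cos (π/(2*n)) * ((Real.cot (π/(4*n)))^2 + 1) := by
  have hnne : ((n:ℝ)) ≠ 0 := Nat.cast_ne_zero.mpr hn.ne'
  have hnpos : (0:ℝ) < n := Nat.cast_pos.mpr hn
  set h := π/(4*(n:ℝ)) with hhdef
  have hpos : 0 < h := by positivity
  have hlt : h < π/2 := by
    rw [hhdef, div_lt_div_iff₀ (by positivity) (by norm_num)]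
    have h1n : (1:ℝ) ≤ (n:ℝ) := by exact_mod_cast hn
    nlinarith [Real.pi_pos, h1n]
  have hsin : 0 < Real.sin h := Real.sin_pos_of_pos_of_lt_pi hpos (by linarith [Real.pi_pos])
  have hcos : 0 < Real.cos h := Real.cos_pos_of_mem_Ioo ⟨by linarith, hlt⟩
  have hcot : Real.cot h = Real.cos h / Real.sin h := Real.cot_eq_cos_div_sin h
  constructor
  · rw [hcot]; positivity
  · have h2 : π/(2*(n:ℝ)) = 2 * h := by rw [hhdef]; field_simp; ring
    rw [h2, hcot, Real.cos_two_mul]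
    field_simp
    nlinarith [Real.sin_sq_add_cos_sq h]

lemma key_ineq {n : ℕ} (hn : 0 < n) (y : ℕ → ℂ) (hy : y n = 0)
    (hcross : 2 * ∑ k ∈ range n, (y k * (starRingEnd ℂ) (y (k+1))).re
      ≤ Real.cos (π/(2*n)) * ∑ k ∈ range n, (Complex.normSq (y k) + Complex.normSq (y (k+1)))) :
    ∑ k ∈ range n, Complex.normSq (y k + y (k+1))
      ≤ (Real.cot (π/(4*n)))^2 * ∑ k ∈ range n, Complex.normSq (y k - y (k+1)) := by
  obtain ⟨hγpos, hrel⟩ := gamma_facts hn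
  set γ := Real.cot (π/(4*n)) with hγdef
  set c := Real.cos (π/(2*n)) with hcdef
  set D := ∑ k ∈ range n, (Complex.normSq (y k) + Complex.normSq (y (k+1))) with hDdef
  set R := ∑ k ∈ range n, (y k * (starRingEnd ℂ) (y (k+1))).re with hRdef
  have hL : ∑ k ∈ range n, Complex.normSq (y k + y (k+1)) = D + 2*R := by
    rw [hDdef, hRdef, Finset.mul_sum, ← Finset.sum_add_distrib]
    exact Finset.sum_congr rfl fun k _ => by rw [Complex.normSq_add]
  have hRr : ∑ k ∈ range n, Complex.normSq (y k - y (k+1)) = D - 2*R := by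
    rw [hDdef, hRdef, Finset.mul_sum, ← Finset.sum_sub_distrib]
    exact Finset.sum_congr rfl fun k _ => by rw [Complex.normSq_sub]
  rw [hL, hRr]
  have hγ1 : 0 < γ^2 + 1 := by positivity
  have hrelD : (γ^2 - 1) * D = c * (γ^2 + 1) * D := by rw [hrel]
  nlinarith [mul_nonneg hγ1.le (by linarith : (0:ℝ) ≤ c * D - 2*R), hrelD]

-- equality case
noncomputable def W (n k : ℕ) : ℝ := Real.sin (((n:ℝ) - k) * (π/(2*n)))

lemma eq_sums {n : ℕ} (hn : 0 < n) :
    ∑ k ∈ range n, (W n k + W n (k+1))^2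
      = (Real.cot (π/(4*n)))^2 * ∑ k ∈ range n, (W n k - W n (k+1))^2 := by
  obtain ⟨hγpos, hrel⟩ := gamma_facts hn
  have hnne : ((n:ℝ)) ≠ 0 := Nat.cast_ne_zero.mpr hn.ne'
  set θ := π/(2*(n:ℝ)) with hθdef
  set γ := Real.cot (π/(4*n)) with hγdef
  set c := Real.cos θ with hcdef
  set w : ℕ → ℝ := fun k => Real.sin (((n:ℝ) - k) * θ) with hwdef
  show ∑ k ∈ range n, (w k + w (k+1))^2 = γ^2 * ∑ k ∈ range n, (w k - w (k+1))^2
  have hnθ : (n:ℝ) * θ = π/2 := by rw [hθdef]; field_simp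
  -- telescoping sum is zero
  set G : ℕ → ℝ := fun k => Real.sin θ / 2 * Real.sin (2*(((n:ℝ) - k) * θ)) with hGdef
  have hterm : ∀ k : ℕ, c * (w k^2 + w (k+1)^2) - 2 * (w k * w (k+1)) = G k - G (k+1) := by
    intro k
    have e1 : ((n:ℝ) - ((k+1 : ℕ) : ℝ)) * θ = ((n:ℝ) - (k:ℝ)) * θ - θ := by push_cast; ring
    simp only [hwdef, hGdef, hcdef]
    rw [e1]
    linear_combination trig_id (((n:ℝ) - k) * θ) θ
  have htel : ∑ k ∈ range n, (c * (w k^2 + w (k+1)^2) - 2 * (w k * w (k+1))) = 0 := by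
    rw [Finset.sum_congr rfl fun k _ => hterm k, Finset.sum_range_sub' G n]
    have hG0 : G 0 = 0 := by
      simp only [hGdef, Nat.cast_zero, sub_zero]
      rw [show 2 * ((n:ℝ) * θ) = π by rw [hnθ]; ring, Real.sin_pi]
      ring
    have hGn : G n = 0 := by
      simp only [hGdef, sub_self, zero_mul, mul_zero, Real.sin_zero]
    rw [hG0, hGn]; ring
  -- combine
  rw [← sub_eq_zero, Finset.mul_sum, ← Finset.sum_sub_distrib]
  have : ∀ k ∈ range n, (w k + w (k+1))^2 - γ^2 * (w k - w (k+1))^2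
      = -(γ^2+1) * (c * (w k^2 + w (k+1)^2) - 2 * (w k * w (k+1))) := by
    intro k _
    linear_combination (-(w k^2) - w (k+1)^2) * hrel
  rw [Finset.sum_congr rfl this, ← Finset.mul_sum, htel, mul_zero]


noncomputable def Yv (n : ℕ) (x : Fin n → ℂ) (k : ℕ) : ℂ :=
  ∑ l ∈ Finset.Ico k n, (if h : l < n then x ⟨l, h⟩ else 0)

lemma Yv_last (n : ℕ) (x : Fin n → ℂ) : Yv n x n = 0 := by simp [Yv]

lemma Yv_step {n : ℕ} (x : Fin n → ℂ) {k : ℕ} (hk : k < n) :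
    Yv n x k - Yv n x (k+1) = x ⟨k, hk⟩ := by
  rw [Yv, Yv, Finset.sum_eq_sum_Ico_succ_bot hk]
  simp [hk]

lemma row_sum {n : ℕ} (x' : ℕ → ℂ) (k : ℕ) (hk : k < n) :
    ∑ l ∈ range n, (if k < l then 2 else if k = l then 1 else 0) * x' l
      = x' k + 2 * ∑ l ∈ Finset.Ico (k+1) n, x' l := by
  rw [Finset.range_eq_Ico, ← Finset.sum_Ico_consecutive _ (Nat.zero_le (k+1)) (by omega : k+1 ≤ n)]
  congr 1
  · rw [← Finset.range_eq_Ico]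
    rw [Finset.sum_eq_single_of_mem k (Finset.self_mem_range_succ k)]
    · simp
    · intro l hl hlk
      rw [Finset.mem_range] at hl
      have h1 : ¬ (k < l) := by omega
      have h2 : ¬ (k = l) := by omega
      simp [h1, h2]
  · rw [Finset.mul_sum]
    apply Finset.sum_congr rfl
    intro l hl
    rw [Finset.mem_Ico] at hl
    have : k < l := by omega
    simp [this]

lemma mulVec_eq {n : ℕ} (x : Fin n → ℂ) (i : Fin n) :
    (Matrix.of fun k ℓ : Fin n =>
      if k < ℓ then (2 : ℂ) else if k = ℓ then 1 else 0).mulVec x i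
      = Yv n x i + Yv n x ((i:ℕ)+1) := by
  have hx' : ∀ j : Fin n, x j = (if h : (j:ℕ) < n then x ⟨(j:ℕ), h⟩ else 0) := by
    intro j; rw [dif_pos j.isLt]
  rw [Matrix.mulVec, dotProduct]
  have step1 : ∀ j : Fin n, (Matrix.of fun k ℓ : Fin n =>
      if k < ℓ then (2 : ℂ) else if k = ℓ then 1 else 0) i j * x j
      = (fun l => (if (i:ℕ) < l then (2:ℂ) else if (i:ℕ) = l then 1 else 0) *
          (if h : l < n then x ⟨l, h⟩ else 0)) (j:ℕ) := by
    intro j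
    simp only [Matrix.of_apply, Fin.lt_def, Fin.ext_iff]
    rw [← hx' j]
  have hA : ∑ j : Fin n, (Matrix.of fun k ℓ : Fin n =>
      if k < ℓ then (2 : ℂ) else if k = ℓ then 1 else 0) i j * x j
      = ∑ l ∈ range n, (if (i:ℕ) < l then (2:ℂ) else if (i:ℕ) = l then 1 else 0) *
          (if h : l < n then x ⟨l, h⟩ else 0) := by
    rw [Finset.sum_congr rfl fun j _ => step1 j]
    exact Fin.sum_univ_eq_sum_range (fun l => (if (i:ℕ) < l then (2:ℂ) else if (i:ℕ) = l then 1 else 0) * (if h : l < n then x ⟨l, h⟩ else 0)) n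
  rw [hA, row_sum _ _ i.isLt]
  have h1 := Yv_step x i.isLt
  have h0 : (if h : (i:ℕ) < n then x ⟨(i:ℕ), h⟩ else 0) = x i := by
    rw [dif_pos i.isLt]
  rw [h0]
  have h2 : (Yv n x ((i:ℕ)+1) : ℂ) = ∑ l ∈ Finset.Ico ((i:ℕ)+1) n, (if h : l < n then x ⟨l, h⟩ else 0) := rfl
  rw [← h2, ← h1]
  ring

lemma norm_sq_euclidean {n : ℕ} (x : EuclideanSpace ℂ (Fin n)) :
    ‖x‖^2 = ∑ i : Fin n, Complex.normSq (x i) := by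
  rw [EuclideanSpace.norm_eq, Real.sq_sqrt (by positivity)]
  exact Finset.sum_congr rfl fun i _ => by rw [Complex.normSq_eq_norm_sq]

theorem stmt5 {n : ℕ} (hn : 0 < n)
    (M : Matrix (Fin n) (Fin n) ℂ)
    (hM : M = Matrix.of fun k ℓ : Fin n =>
      if k < ℓ then (2 : ℂ) else if k = ℓ then 1 else 0) :
    opN M = Real.cot (π / (4 * n)) := by
  unfold opN
  set T := Matrix.toEuclideanCLM (𝕜 := ℂ) M with hT
  set γ := Real.cot (π/(4*(n:ℝ))) with hγdef
  have hγpos : 0 < γ := by rw [hγdef]; exact (gamma_facts hn).1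
  have hTx : ∀ (x2 : EuclideanSpace ℂ (Fin n)) (i : Fin n),
      T x2 i = Yv n x2 i + Yv n x2 ((i:ℕ)+1) := by
    intro x2 i
    have h1 : T x2 i = M.mulVec x2 i := congrFun (Matrix.ofLp_toEuclideanCLM M x2) i
    rw [h1, hM]
    exact mulVec_eq _ i
  have hnormTx : ∀ x2 : EuclideanSpace ℂ (Fin n),
      ‖T x2‖^2 = ∑ k ∈ range n, Complex.normSq (Yv n x2 k + Yv n x2 (k+1)) := by
    intro x2
    rw [norm_sq_euclidean]
    have hc : ∀ i : Fin n, Complex.normSq (T x2 i)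
        = (fun k => Complex.normSq (Yv n x2 k + Yv n x2 (k+1))) ((i:ℕ)) :=
      fun i => by rw [hTx x2 i]
    rw [Finset.sum_congr rfl fun i _ => hc i]
    exact Fin.sum_univ_eq_sum_range (fun k => Complex.normSq (Yv n x2 k + Yv n x2 (k+1))) n
  have hnormx : ∀ x2 : EuclideanSpace ℂ (Fin n),
      ‖x2‖^2 = ∑ k ∈ range n, Complex.normSq (Yv n x2 k - Yv n x2 (k+1)) := by
    intro x2
    rw [norm_sq_euclidean]
    have hc : ∀ i : Fin n, Complex.normSq (x2 i)
        = (fun k => Complex.normSq (Yv n x2 k - Yv n x2 (k+1))) ((i:ℕ)) := by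
      intro i
      have := Yv_step x2 i.isLt
      simp only [Fin.eta] at this
      rw [← this]
    rw [Finset.sum_congr rfl fun i _ => hc i]
    exact Fin.sum_univ_eq_sum_range (fun k => Complex.normSq (Yv n x2 k - Yv n x2 (k+1))) n
  have upper : ∀ x2 : EuclideanSpace ℂ (Fin n), ‖T x2‖ ≤ γ * ‖x2‖ := by
    intro x2
    have hy : Yv n x2 n = 0 := Yv_last n x2
    have hk : ∑ k ∈ range n, Complex.normSq (Yv n x2 k + Yv n x2 (k+1))
        ≤ γ^2 * ∑ k ∈ range n, Complex.normSq (Yv n x2 k - Yv n x2 (k+1)) := by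
      exact key_ineq hn (Yv n x2) hy (cross_bound hn (Yv n x2) hy)
    have h2 : ‖T x2‖^2 ≤ (γ * ‖x2‖)^2 := by
      rw [hnormTx, mul_pow, hnormx]; exact hk
    have h3 := Real.sqrt_le_sqrt h2
    rwa [Real.sqrt_sq (norm_nonneg _), Real.sqrt_sq (by positivity)] at h3
  -- the maximizing vector
  set xe : EuclideanSpace ℂ (Fin n) :=
    (WithLp.equiv 2 _).symm (fun i : Fin n => ((W n i - W n ((i:ℕ)+1) : ℝ) : ℂ)) with hxe
  have hxei : ∀ i : Fin n, xe i = ((W n (i:ℕ) - W n ((i:ℕ)+1) : ℝ) : ℂ) := fun i => rfl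
  have hWn : W n n = 0 := by simp [W]
  have hYe : ∀ k : ℕ, k ≤ n → Yv n xe k = ((W n k : ℝ) : ℂ) := by
    intro k hk
    rw [Yv]
    have hcong : ∀ l ∈ Finset.Ico k n, (if h : l < n then xe ⟨l,h⟩ else 0)
        = (fun j => ((W n j : ℝ):ℂ)) l - (fun j => ((W n j : ℝ):ℂ)) (l+1) := by
      intro l hl; rw [Finset.mem_Ico] at hl
      rw [dif_pos hl.2, hxei ⟨l, hl.2⟩]
      push_cast
      ring
    rw [Finset.sum_congr rfl hcong, Finset.sum_Ico_eq_sub _ hk,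
      Finset.sum_range_sub' (fun j => ((W n j : ℝ):ℂ)) n,
      Finset.sum_range_sub' (fun j => ((W n j : ℝ):ℂ)) k, hWn]
    push_cast
    ring
  have hTxe : ‖T xe‖^2 = γ^2 * ‖xe‖^2 := by
    rw [hnormTx, hnormx]
    have e1 : ∀ k ∈ range n, Complex.normSq (Yv n xe k + Yv n xe (k+1))
        = (W n k + W n (k+1))^2 := by
      intro k hk; rw [Finset.mem_range] at hk
      rw [hYe k hk.le, hYe (k+1) hk]
      rw [show ((W n k : ℝ):ℂ) + ((W n (k+1) : ℝ):ℂ) = ((W n k + W n (k+1) : ℝ) : ℂ) by push_cast; ring]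
      rw [Complex.normSq_ofReal]; ring
    have e2 : ∀ k ∈ range n, Complex.normSq (Yv n xe k - Yv n xe (k+1))
        = (W n k - W n (k+1))^2 := by
      intro k hk; rw [Finset.mem_range] at hk
      rw [hYe k hk.le, hYe (k+1) hk]
      rw [show ((W n k : ℝ):ℂ) - ((W n (k+1) : ℝ):ℂ) = ((W n k - W n (k+1) : ℝ) : ℂ) by push_cast; ring]
      rw [Complex.normSq_ofReal]; ring
    rw [Finset.sum_congr rfl e1, Finset.sum_congr rfl e2]
    exact eq_sums hn
  have hxene : xe ≠ 0 := by
    intro h0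
    have h1 : xe ⟨0, hn⟩ = 0 := by rw [h0]; rfl
    rw [hxei ⟨0, hn⟩] at h1
    have hW0 : W n 0 = 1 := by
      have hnne : ((n:ℝ)) ≠ 0 := Nat.cast_ne_zero.mpr hn.ne'
      rw [W]
      rw [show ((n:ℝ) - (0:ℕ)) * (π/(2*n)) = π/2 by field_simp; ring]
      exact Real.sin_pi_div_two
    have hnne : ((n:ℝ)) ≠ 0 := Nat.cast_ne_zero.mpr hn.ne'
    have h1n : (1:ℝ) ≤ (n:ℝ) := by exact_mod_cast hn
    have hθpos : 0 < π/(2*(n:ℝ)) := by positivity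
    have hθle : π/(2*(n:ℝ)) ≤ π := by
      rw [div_le_iff₀ (by positivity)]
      nlinarith [Real.pi_pos]
    have hcos1 : Real.cos (π/(2*(n:ℝ))) < 1 := by
      have hc := Real.cos_lt_cos_of_nonneg_of_le_pi (le_refl 0) hθle hθpos
      rwa [Real.cos_zero] at hc
    have hW1 : W n 1 = Real.cos (π/(2*(n:ℝ))) := by
      rw [W, show ((n:ℝ) - ((1:ℕ):ℝ)) * (π/(2*(n:ℝ))) = π/2 - π/(2*(n:ℝ)) by
        push_cast; field_simp]
      exact Real.sin_pi_div_two_sub _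
    rw [Complex.ofReal_eq_zero, sub_eq_zero] at h1
    rw [hW0, hW1] at h1
    linarith
  have hxpos : 0 < ‖xe‖ := norm_pos_iff.mpr hxene
  have hTxe' : ‖T xe‖ = γ * ‖xe‖ := by
    have h2 : ‖T xe‖^2 = (γ * ‖xe‖)^2 := by rw [hTxe]; ring
    have h3 := congrArg Real.sqrt h2
    rwa [Real.sqrt_sq (norm_nonneg _), Real.sqrt_sq (by positivity)] at h3
  apply le_antisymm
  · exact T.opNorm_le_bound hγpos.le upper
  · have h4 := T.le_opNorm xe
    rw [hTxe'] at h4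
    exact le_of_mul_le_mul_right h4 hxpos
end

section
/- Let Nₙ be the n×n nilpotent matrix with ones on the superdiagonal and zeros elsewhere, and let Dₙ = (I − Nₙ)(I − Nₙ)*. Then for each ℓ = 0,…,n−1, the vector v^{(ℓ)} with components vⱼ^{(ℓ)} = sin(π(2ℓ+1)j/(2n+1)), j = 1,…,n, satisfies Dₙ v^{(ℓ)} = 4 sin²(π(2ℓ+1)/(2(2n+1))) v^{(ℓ)}. -/
open Real
open scoped Matrix

theorem stmt7 {n : ℕ} (N : Matrix (Fin n) (Fin n) ℝ)
    (hN : N = Matrix.of fun k ℓ : Fin n => if (ℓ : ℕ) = (k : ℕ) + 1 then (1 : ℝ) else 0)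
    (D : Matrix (Fin n) (Fin n) ℝ) (hD : D = (1 - N) * (1 - N)ᵀ)
    (ℓ : ℕ) (hℓ : ℓ < n)
    (v : Fin n → ℝ)
    (hv : v = fun j : Fin n => Real.sin (π * (2 * ℓ + 1) * ((j : ℕ) + 1) / (2 * n + 1))) :
    D.mulVec v = (4 * Real.sin (π * (2 * ℓ + 1) / (2 * (2 * n + 1))) ^ 2) • v := by
  subst hN hD hv
  have hn : 0 < n := lt_of_le_of_lt (Nat.zero_le _) hℓ
  set θ : ℝ := π * (2 * ℓ + 1) / (2 * n + 1) with hθ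
  set s : ℕ → ℝ := fun m => Real.sin (θ * m) with hs
  have hs0 : s 0 = 0 := by simp [hs]
  have hvs : ∀ j : Fin n, Real.sin (π * (2 * ℓ + 1) * ((j : ℕ) + 1) / (2 * n + 1))
      = s ((j : ℕ) + 1) := by
    intro j
    simp only [hs, hθ]
    congr 1
    push_cast
    ring
  -- key trig identity
  have key : ∀ a : ℝ, 2 * Real.sin a - Real.sin (a - θ) - Real.sin (a + θ)
      = 4 * Real.sin (θ / 2) ^ 2 * Real.sin a := by
    intro a
    have h1 := Real.sin_sq_add_cos_sq (θ / 2)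
    have h2 : Real.cos θ = 2 * Real.cos (θ / 2) ^ 2 - 1 := by
      have := Real.cos_two_mul (θ / 2)
      rw [show 2 * (θ / 2) = θ by ring] at this
      exact this
    rw [Real.sin_sub, Real.sin_add]
    linear_combination (-2 * Real.sin a) * h2 + (-4 * Real.sin a) * h1
  -- reflection identity at the boundary
  have hrefl : s (n + 1) = s n := by
    have h2n : (2 * (n : ℝ) + 1) ≠ 0 := by positivity
    have hx : θ * ((n : ℝ) + 1) = (2 * (ℓ : ℝ) + 1) * π - θ * n := by
      field_simp [hθ]
      have h3 : θ * (2 * (n : ℝ) + 1) = π * (2 * ℓ + 1) := by rw [hθ]; exact div_mul_cancel₀ _ h2n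
      linear_combination h3
    have hsin : Real.sin ((2 * (ℓ : ℝ) + 1) * π) = 0 := by
      have := Real.sin_nat_mul_pi (2 * ℓ + 1)
      push_cast at this
      convert this using 2
    have hcos : Real.cos ((2 * (ℓ : ℝ) + 1) * π) = -1 := by
      rw [show (2 * (ℓ : ℝ) + 1) * π = (ℓ : ℝ) * (2 * π) + π by ring]
      exact Real.cos_nat_mul_two_pi_add_pi ℓ
    simp only [hs]
    push_cast
    rw [hx, Real.sin_sub, hsin, hcos]
    ring
  -- sums of indicator rows
  have sum1 : ∀ (u : Fin n → ℝ) (k : Fin n),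
      (∑ j : Fin n, (if (k : ℕ) = (j : ℕ) + 1 then (1 : ℝ) else 0) * u j)
      = if hk : 1 ≤ (k : ℕ) then u ⟨(k : ℕ) - 1, lt_of_le_of_lt (Nat.sub_le _ _) k.isLt⟩
        else 0 := by
    intro u k
    split_ifs with hk
    · rw [Finset.sum_eq_single (⟨(k : ℕ) - 1, lt_of_le_of_lt (Nat.sub_le _ _) k.isLt⟩ : Fin n)]
      · rw [if_pos (by simp; omega), one_mul]
      · intro j _ hj
        rw [if_neg, zero_mul]
        intro h
        apply hj
        apply Fin.ext
        simp
        omega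
      · intro h
        exact absurd (Finset.mem_univ _) h
    · apply Finset.sum_eq_zero
      intro j _
      rw [if_neg (by omega), zero_mul]
  have sum2 : ∀ (u : Fin n → ℝ) (k : Fin n),
      (∑ j : Fin n, (if (j : ℕ) = (k : ℕ) + 1 then (1 : ℝ) else 0) * u j)
      = if hk : (k : ℕ) + 1 < n then u ⟨(k : ℕ) + 1, hk⟩ else 0 := by
    intro u k
    split_ifs with hk
    · rw [Finset.sum_eq_single (⟨(k : ℕ) + 1, hk⟩ : Fin n)]
      · rw [if_pos rfl, one_mul]
      · intro j _ hj
        rw [if_neg, zero_mul]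
        intro h
        exact hj (Fin.ext h)
      · intro h
        exact absurd (Finset.mem_univ _) h
    · apply Finset.sum_eq_zero
      intro j _
      have hjn := j.isLt
      rw [if_neg (by omega), zero_mul]
  set M : Matrix (Fin n) (Fin n) ℝ :=
    Matrix.of fun k ℓ : Fin n => if (ℓ : ℕ) = (k : ℕ) + 1 then (1 : ℝ) else 0 with hM
  rw [← Matrix.mulVec_mulVec]
  have hwv : (1 - M)ᵀ.mulVec (fun j : Fin n =>
        Real.sin (π * (2 * ℓ + 1) * ((j : ℕ) + 1) / (2 * n + 1)))
      = fun k : Fin n => s ((k : ℕ) + 1) - s (k : ℕ) := by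
    funext k
    simp only [Matrix.mulVec, dotProduct, Matrix.transpose_apply, Matrix.sub_apply,
      Matrix.one_apply, hM, Matrix.of_apply, sub_mul]
    rw [Finset.sum_sub_distrib]
    have e1 : (∑ j : Fin n, (if j = k then (1 : ℝ) else 0) *
        Real.sin (π * (2 * ℓ + 1) * ((j : ℕ) + 1) / (2 * n + 1))) = s ((k : ℕ) + 1) := by
      rw [Finset.sum_eq_single k]
      · rw [if_pos rfl, one_mul, hvs]
      · intro j _ hj; rw [if_neg hj, zero_mul]
      · intro h; exact absurd (Finset.mem_univ _) h
    rw [e1, sum1]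
    split_ifs with hk
    · rw [hvs]
      congr 2
      simp
      omega
    · have hk0 : (k : ℕ) = 0 := by omega
      rw [hk0, hs0]
  rw [hwv]
  funext k
  have hθhalf : π * (2 * ℓ + 1) / (2 * (2 * n + 1)) = θ / 2 := by
    have h2n : (2 * (n : ℝ) + 1) ≠ 0 := by positivity
    rw [hθ]
    field_simp
  simp only [Matrix.mulVec, dotProduct, Matrix.sub_apply, Matrix.one_apply, hM,
    Matrix.of_apply, sub_mul, Pi.smul_apply, smul_eq_mul]
  rw [Finset.sum_sub_distrib]
  have e1 : (∑ j : Fin n, (if k = j then (1 : ℝ) else 0) * (s ((j : ℕ) + 1) - s (j : ℕ)))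
      = s ((k : ℕ) + 1) - s (k : ℕ) := by
    rw [Finset.sum_eq_single k]
    · rw [if_pos rfl, one_mul]
    · intro j _ hj; rw [if_neg (Ne.symm hj), zero_mul]
    · intro h; exact absurd (Finset.mem_univ _) h
  rw [e1, sum2, hvs, hθhalf]
  have hterm : (if hk : (k : ℕ) + 1 < n then
        s (((⟨(k : ℕ) + 1, hk⟩ : Fin n) : ℕ) + 1) - s ((⟨(k : ℕ) + 1, hk⟩ : Fin n) : ℕ) else 0)
      = s ((k : ℕ) + 2) - s ((k : ℕ) + 1) := by
    split_ifs with hk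
    · norm_num
    · have hkn : (k : ℕ) = n - 1 := by have := k.isLt; omega
      have h1 : (k : ℕ) + 2 = n + 1 := by have := k.isLt; omega
      have h2 : (k : ℕ) + 1 = n := by have := k.isLt; omega
      rw [h1, h2, hrefl]
      ring
  rw [hterm]
  -- now the pure trig computation
  have hk1 : s (k : ℕ) = Real.sin (θ * ((k : ℕ) + 1) - θ) := by
    simp only [hs]; congr 1; ring
  have hk2 : s ((k : ℕ) + 2) = Real.sin (θ * ((k : ℕ) + 1) + θ) := by
    simp only [hs]; congr 1; push_cast; ring
  have hk3 : s ((k : ℕ) + 1) = Real.sin (θ * ((k : ℕ) + 1)) := by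
    simp only [hs]; congr 1; push_cast; ring
  rw [hk1, hk2, hk3]
  linarith [key (θ * ((k : ℕ) + 1))]
end

section
/- Let M̃ₙ be the Hankel matrix with (M̃ₙ)_{jk} = 2 if j + k ≤ n, 1 if j + k = n + 1, and 0 if j + k > n + 1 (indices from 1 to n). Then for each ℓ = 0,…,n−1, the vector c^{(ℓ)} with cⱼ^{(ℓ)} = cos((2ℓ + 1/2)(π/(2n))(2j − 1)) is an eigenvector of M̃ₙ with eigenvalue cot((2ℓ + 1/2)·π/(2n)). -/
open Real

theorem stmt8 {n : ℕ} (hn : 0 < n)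
    (M : Matrix (Fin n) (Fin n) ℝ)
    (hM : M = Matrix.of fun j k : Fin n =>
      if (j : ℕ) + 1 + ((k : ℕ) + 1) ≤ n then (2 : ℝ)
      else if (j : ℕ) + 1 + ((k : ℕ) + 1) = n + 1 then 1 else 0)
    (ℓ : ℕ) (hℓ : ℓ < n)
    (c : Fin n → ℝ)
    (hc : c = fun j : Fin n =>
      Real.cos ((2 * ℓ + 1 / 2) * (π / (2 * n)) * (2 * ((j : ℕ) + 1) - 1))) :
    M.mulVec c = Real.cot ((2 * ℓ + 1 / 2) * π / (2 * n)) • c := by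
  subst hM hc
  have hn' : (0:ℝ) < n := by exact_mod_cast hn
  set θ : ℝ := (2 * ℓ + 1 / 2) * (π / (2 * n)) with hθ
  have hθpos : 0 < θ := by
    apply mul_pos
    · positivity
    · positivity
  have hθlt : θ < π := by
    have h1 : 2*(ℓ:ℝ) + 1/2 < 2*n := by
      have : (ℓ:ℝ) + 1 ≤ n := by exact_mod_cast hℓ
      linarith
    calc θ = (2*(ℓ:ℝ)+1/2) * π / (2*n) := by rw [hθ, mul_div_assoc]
    _ < (2*(n:ℝ)) * π / (2*n) := by gcongr
    _ = π := by field_simp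
  have hsin : 0 < Real.sin θ := Real.sin_pos_of_pos_of_lt_pi hθpos hθlt
  have h2n : 2 * (n:ℝ) * θ = 2 * ℓ * π + π / 2 := by
    rw [hθ]; field_simp
  have hsum : ∀ m : ℕ, (∑ k ∈ Finset.range m, Real.cos (θ * (2*k+1))) * (2 * Real.sin θ)
      = Real.sin (2*m*θ) := by
    intro m
    induction m with
    | zero => simp
    | succ m ih =>
      rw [Finset.sum_range_succ, add_mul, ih]
      have h := Real.sin_sub_sin (2*((m:ℝ)+1)*θ) (2*(m:ℝ)*θ)
      rw [show (2*((m:ℝ)+1)*θ - 2*m*θ)/2 = θ by ring,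
          show (2*((m:ℝ)+1)*θ + 2*m*θ)/2 = θ*(2*m+1) by ring] at h
      push_cast
      linarith [h]
  funext j
  have hj : (j:ℕ) < n := j.isLt
  set m : ℕ := n - 1 - (j:ℕ) with hm
  have hmj : m + (j:ℕ) + 1 = n := by omega
  have hcot : Real.cot ((2 * ℓ + 1 / 2) * π / (2 * n)) = Real.cos θ / Real.sin θ := by
    rw [Real.cot_eq_cos_div_sin, hθ, mul_div_assoc]
  rw [Matrix.mulVec, dotProduct]
  simp only [Matrix.of_apply, Pi.smul_apply, smul_eq_mul, hcot]
  rw [Fin.sum_univ_eq_sum_range (fun k : ℕ =>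
      (if (j:ℕ) + 1 + (k + 1) ≤ n then (2:ℝ)
        else if (j:ℕ) + 1 + (k + 1) = n + 1 then 1 else 0)
      * Real.cos (θ * (2 * ((k:ℝ) + 1) - 1)))]
  have hsub : Finset.range (m+1) ⊆ Finset.range n := Finset.range_subset_range.mpr (by omega)
  rw [← Finset.sum_subset hsub (by
    intro k hk hk'
    simp only [Finset.mem_range] at hk hk'
    have h1 : ¬ ((j:ℕ) + 1 + (k + 1) ≤ n) := by omega
    have h2 : ¬ ((j:ℕ) + 1 + (k + 1) = n + 1) := by omega
    rw [if_neg h1, if_neg h2, zero_mul])]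
  rw [Finset.sum_range_succ]
  have hmid : (if (j:ℕ) + 1 + (m + 1) ≤ n then (2:ℝ)
        else if (j:ℕ) + 1 + (m + 1) = n + 1 then 1 else 0) = 1 := by
    rw [if_neg (by omega), if_pos (by omega)]
  rw [hmid, one_mul]
  rw [Finset.sum_congr rfl (fun k hk => by
    simp only [Finset.mem_range] at hk
    rw [if_pos (by omega)])]
  have hS' : ∑ k ∈ Finset.range m, 2 * Real.cos (θ * (2*((k:ℝ)+1)-1))
      = 2 * ∑ k ∈ Finset.range m, Real.cos (θ*(2*(k:ℝ)+1)) := by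
    rw [Finset.mul_sum]
    exact Finset.sum_congr rfl fun k _ => by
      rw [show θ*(2*((k:ℝ)+1)-1) = θ*(2*(k:ℝ)+1) by ring]
  rw [hS']
  -- now goal: S * 2 + cos(θ*(2*(m+1)-1)) = cosθ/sinθ * cos(θ*(2*(j+1)-1))
  have hS := hsum m
  have hmr : (m:ℝ) = n - (j:ℕ) - 1 := by
    have : ((m + (j:ℕ) + 1 : ℕ) : ℝ) = n := by exact_mod_cast congrArg (Nat.cast : ℕ → ℝ) hmj
    push_cast at this
    linarith
  have key : Real.sin (2*(m:ℝ)*θ) + Real.sin θ * Real.cos (θ * (2*(m:ℝ)+1))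
      = Real.cos θ * Real.cos (θ * (2*(j:ℝ)+1)) := by
    have e1 : 2*(m:ℝ)*θ = (π/2 - (2*(j:ℝ)+2)*θ) + ℓ * (2*π) := by
      rw [hmr]; linear_combination h2n
    have e2 : θ * (2*(m:ℝ)+1) = (π/2 - (2*(j:ℝ)+1)*θ) + ℓ * (2*π) := by
      rw [hmr]; linear_combination h2n
    rw [e1, e2, Real.sin_add_nat_mul_two_pi, Real.cos_add_nat_mul_two_pi,
        Real.sin_pi_div_two_sub, Real.cos_pi_div_two_sub]
    rw [show (2*(j:ℝ)+2)*θ = (2*(j:ℝ)+1)*θ + θ by ring,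
        show θ * (2*(j:ℝ)+1) = (2*(j:ℝ)+1)*θ by ring]
    linear_combination Real.cos_add ((2*(j:ℝ)+1)*θ) θ
  rw [div_mul_eq_mul_div, eq_div_iff (ne_of_gt hsin)]
  have harg1 : θ * (2 * ((m:ℝ) + 1) - 1) = θ * (2*(m:ℝ)+1) := by ring
  have harg2 : θ * (2 * ((j:ℝ) + 1) - 1) = θ * (2*(j:ℝ)+1) := by ring
  rw [harg1, harg2]
  linear_combination hS + key
end

section
/- (Eneström–Kakeya) If 0 < a₀ < a₁ < ⋯ < aₙ are real, then every zero of P(z) = a₀ + a₁z + ⋯ + aₙzⁿ lies in the open unit disc. -/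
/-- A unit complex number with real part 1 is 1. -/
lemma aux_unit_re_one (u : ℂ) (h1 : ‖u‖ = 1) (h2 : u.re = 1) : u = 1 := by
  have hsq := Complex.sq_norm u
  rw [h1, Complex.normSq_apply] at hsq
  have him : u.im = 0 := by nlinarith
  exact Complex.ext (by simpa using h2) (by simpa using him)

theorem stmt10 (n : ℕ) (a : ℕ → ℝ) (h0 : 0 < a 0)
    (hmono : ∀ i, i < n → a i < a (i + 1))
    (z : ℂ) (hz : (∑ i ∈ Finset.range (n + 1), (a i : ℂ) * z ^ i) = 0) :
    ‖z‖ < 1 := by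
  by_contra hcon
  push_neg at hcon
  -- positivity of coefficients
  have hpos : ∀ i, i ≤ n → 0 < a i := by
    intro i hi
    induction i with
    | zero => exact h0
    | succ k ih =>
      exact lt_trans (ih (Nat.le_of_succ_le hi)) (hmono k (Nat.lt_of_succ_le hi))
  rcases Nat.eq_zero_or_pos n with rfl | hn
  · simp only [zero_add, Finset.sum_range_one, pow_zero, mul_one] at hz
    exact h0.ne' (by exact_mod_cast hz)
  -- key algebraic identity: (1-z) * P(z) telescopes
  have t1 : ∀ m : ℕ, (1 - z) * ∑ i ∈ Finset.range (m + 1), (a i : ℂ) * z ^ i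
      = (a 0 : ℂ) + (∑ i ∈ Finset.range m, ((a (i + 1) - a i : ℝ) : ℂ) * z ^ (i + 1))
        - (a m : ℂ) * z ^ (m + 1) := by
    intro m
    induction m with
    | zero =>
      simp only [zero_add, Finset.sum_range_one, Finset.sum_range_zero, pow_zero, mul_one,
        add_zero, pow_one]
      ring
    | succ k ih =>
      rw [Finset.sum_range_succ, Finset.sum_range_succ
        (f := fun i => ((a (i + 1) - a i : ℝ) : ℂ) * z ^ (i + 1))]
      push_cast
      push_cast at ih
      linear_combination ih
  have key : (a n : ℂ) * z ^ (n + 1)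
      = (a 0 : ℂ) + ∑ i ∈ Finset.range n, ((a (i + 1) - a i : ℝ) : ℂ) * z ^ (i + 1) := by
    have h := t1 n
    rw [hz, mul_zero] at h
    linear_combination h
  have hanpos : 0 < a n := hpos n le_rfl
  have htel : ∑ i ∈ Finset.range n, (a (i + 1) - a i) = a n - a 0 :=
    Finset.sum_range_sub a n
  set r := ‖z‖ with hr
  rcases eq_or_lt_of_le hcon with hr1 | hr1
  · -- case |z| = 1 : equality analysis
    have hr1 : r = 1 := hr1.symm
    set w : ℂ := (starRingEnd ℂ) (z ^ (n + 1)) with hw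
    have habsw : ‖w‖ = 1 := by
      rw [hw, Complex.norm_conj, norm_pow, ← hr, hr1, one_pow]
    have hzz : z ^ (n + 1) * w = 1 := by
      rw [hw, Complex.mul_conj]
      norm_cast
      rw [Complex.normSq_eq_norm_sq, norm_pow, ← hr, hr1, one_pow, one_pow]
    -- terms have modulus 1
    have habsterm : ∀ i : ℕ, ‖z ^ (i + 1) * w‖ = 1 := by
      intro i
      rw [norm_mul, norm_pow, ← hr, hr1, one_pow, habsw, one_mul]
    -- real-part identity
    have eq2 : (a n : ℂ) = (a 0 : ℂ) * w
        + ∑ i ∈ Finset.range n, ((a (i + 1) - a i : ℝ) : ℂ) * (z ^ (i + 1) * w) := by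
      calc (a n : ℂ) = ((a n : ℂ) * z ^ (n + 1)) * w := by
            rw [mul_assoc, hzz, mul_one]
        _ = ((a 0 : ℂ) + ∑ i ∈ Finset.range n,
              ((a (i + 1) - a i : ℝ) : ℂ) * z ^ (i + 1)) * w := by rw [key]
        _ = _ := by rw [add_mul, Finset.sum_mul]; congr 1; apply Finset.sum_congr rfl
                    intro i _; ring
    have eqre : a n = a 0 * w.re
        + ∑ i ∈ Finset.range n, (a (i + 1) - a i) * (z ^ (i + 1) * w).re := by
      have := congrArg Complex.re eq2
      simpa [Complex.re_sum, Complex.re_ofReal_mul, mul_assoc] using this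
    have hrele : ∀ i : ℕ, (z ^ (i + 1) * w).re ≤ 1 := by
      intro i
      calc (z ^ (i + 1) * w).re ≤ ‖z ^ (i + 1) * w‖ := Complex.re_le_norm _
        _ = 1 := habsterm i
    have hwre_le : w.re ≤ 1 := by
      calc w.re ≤ ‖w‖ := Complex.re_le_norm _
        _ = 1 := habsw
    have hsum_le : ∑ i ∈ Finset.range n, (a (i + 1) - a i) * (z ^ (i + 1) * w).re
        ≤ a n - a 0 := by
      rw [← htel]
      refine Finset.sum_le_sum fun i hi => ?_
      have hd : 0 ≤ a (i + 1) - a i :=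
        le_of_lt (sub_pos.mpr (hmono i (Finset.mem_range.mp hi)))
      nlinarith [hrele i]
    -- the coefficient of w must be tight
    have hwre : w.re = 1 := by
      by_contra hne
      have hlt : w.re < 1 := lt_of_le_of_ne hwre_le hne
      nlinarith [eqre, hsum_le, h0]
    -- the i = 0 term must be tight too
    have hzw : (z ^ 1 * w).re = 1 := by
      by_contra hne
      have hlt : (z ^ 1 * w).re < 1 := lt_of_le_of_ne (hrele 0) hne
      have hstrict : ∑ i ∈ Finset.range n, (a (i + 1) - a i) * (z ^ (i + 1) * w).re
          < a n - a 0 := by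
        rw [← htel]
        refine Finset.sum_lt_sum (fun i hi => ?_) ⟨0, Finset.mem_range.mpr hn, ?_⟩
        · have hd : 0 ≤ a (i + 1) - a i :=
            le_of_lt (sub_pos.mpr (hmono i (Finset.mem_range.mp hi)))
          nlinarith [hrele i]
        · have hd : 0 < a (0 + 1) - a 0 := sub_pos.mpr (hmono 0 hn)
          nlinarith
      nlinarith [eqre, hwre, h0]
    -- hence w = 1 and z = 1
    have hw1 : w = 1 := aux_unit_re_one w habsw hwre
    have hz1 : z = 1 := by
      apply aux_unit_re_one z (by rw [← hr, hr1])
      have := hzw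
      rw [hw1, mul_one, pow_one] at this
      exact this
    rw [hz1] at hz
    simp only [one_pow, mul_one] at hz
    have : ((∑ i ∈ Finset.range (n + 1), a i : ℝ) : ℂ) = 0 := by push_cast; exact hz
    have hsum0 : ∑ i ∈ Finset.range (n + 1), a i = 0 := by exact_mod_cast this
    have hsumpos : 0 < ∑ i ∈ Finset.range (n + 1), a i :=
      Finset.sum_pos (fun i hi => hpos i (Nat.lt_succ_iff.mp (Finset.mem_range.mp hi)))
        ⟨0, Finset.mem_range.mpr (Nat.succ_pos n)⟩
    exact hsumpos.ne' hsum0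
  · -- case |z| > 1 : strict inequality from the modulus estimate
    have h1 : a n * r ^ (n + 1) = ‖(a n : ℂ) * z ^ (n + 1)‖ := by
      rw [norm_mul, norm_pow, Complex.norm_real, Real.norm_eq_abs, abs_of_pos hanpos, hr]
    have h2 : ‖(a 0 : ℂ) + ∑ i ∈ Finset.range n,
        ((a (i + 1) - a i : ℝ) : ℂ) * z ^ (i + 1)‖
        ≤ a 0 + ∑ i ∈ Finset.range n, (a (i + 1) - a i) * r ^ (i + 1) := by
      refine (norm_add_le _ _).trans ?_
      gcongr
      · rw [Complex.norm_real, Real.norm_eq_abs, abs_of_pos h0]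
      · refine (norm_sum_le _ _).trans ?_
        refine Finset.sum_le_sum fun i hi => ?_
        have hd : 0 ≤ a (i + 1) - a i :=
          le_of_lt (sub_pos.mpr (hmono i (Finset.mem_range.mp hi)))
        rw [norm_mul, norm_pow, Complex.norm_real, Real.norm_eq_abs, abs_of_nonneg hd, ← hr]
    have h3 : ∑ i ∈ Finset.range n, (a (i + 1) - a i) * r ^ (i + 1)
        ≤ (a n - a 0) * r ^ n := by
      rw [← htel, Finset.sum_mul]
      refine Finset.sum_le_sum fun i hi => ?_
      have hd : 0 ≤ a (i + 1) - a i :=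
        le_of_lt (sub_pos.mpr (hmono i (Finset.mem_range.mp hi)))
      have hp : r ^ (i + 1) ≤ r ^ n :=
        pow_le_pow_right₀ hcon (Finset.mem_range.mp hi)
      nlinarith
    have hrn : (1 : ℝ) ≤ r ^ n := one_le_pow₀ hcon
    have h4 : a 0 ≤ a 0 * r ^ n := by nlinarith
    have h5 : a n * r ^ n < a n * r ^ (n + 1) := by
      have hp : r ^ n < r ^ (n + 1) := pow_lt_pow_right₀ hr1 (Nat.lt_succ_self n)
      nlinarith
    rw [key] at h1
    nlinarith [h1, h2, h3, h4, h5]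
end

section
/- If A is an n×n upper triangular Toeplitz matrix with ‖A‖ ≤ 1, then there exists an analytic function f on the open unit disc with sup_{|z|<1} |f(z)| ≤ 1 such that A = Tₙ(f). -/
set_option maxHeartbeats 1000000


open scoped Topology
open Filter

/-- `f` has Taylor coefficients `c` at `0`. -/
def HC (f : ℂ → ℂ) (c : ℕ → ℂ) : Prop :=
  HasFPowerSeriesAt f (FormalMultilinearSeries.ofScalars ℂ c) 0

lemma ofScalars_coeff (c : ℕ → ℂ) (n : ℕ) :
    (FormalMultilinearSeries.ofScalars ℂ c).coeff n = c n := by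
  rw [FormalMultilinearSeries.coeff]
  simpa using FormalMultilinearSeries.ofScalars_apply_eq (E := ℂ) c 1 n

lemma HC_iff {f : ℂ → ℂ} {c : ℕ → ℂ} :
    HC f c ↔ ∀ᶠ z in 𝓝 (0 : ℂ), HasSum (fun n => c n * z ^ n) (f z) := by
  rw [HC, hasFPowerSeriesAt_iff]
  simp only [zero_add, ofScalars_coeff, smul_eq_mul]
  exact eventually_congr (Eventually.of_forall fun z => by
    constructor <;> intro h <;> [skip; skip] <;>
      simpa [mul_comm] using h)

lemma HC.congr {f f' : ℂ → ℂ} {c : ℕ → ℂ} (h : HC f c)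
    (hff' : ∀ᶠ z in 𝓝 (0 : ℂ), f z = f' z) : HC f' c := by
  rw [HC_iff] at h ⊢
  filter_upwards [h, hff'] with z h1 h2
  rwa [h2] at h1

lemma HC.unique {f : ℂ → ℂ} {c c' : ℕ → ℂ} (h : HC f c) (h' : HC f c') : c = c' := by
  have := h.eq_formalMultilinearSeries h'
  exact FormalMultilinearSeries.ofScalars_series_injective ℂ ℂ this

lemma HC.iteratedDeriv {f : ℂ → ℂ} {c : ℕ → ℂ} (h : HC f c) (k : ℕ) :
    iteratedDeriv k f 0 = (k.factorial : ℂ) * c k := by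
  obtain ⟨r, hr⟩ := h
  have h2 := hr.factorial_smul (y := (1 : ℂ)) k
  rw [iteratedDeriv_eq_iteratedFDeriv, ← h2]
  have : (FormalMultilinearSeries.ofScalars ℂ c) k (fun _ => (1 : ℂ)) = c k := by
    simpa using FormalMultilinearSeries.ofScalars_apply_eq (E := ℂ) c 1 k
  rw [this]
  simp [nsmul_eq_mul]

lemma HC.analytic {f : ℂ → ℂ} (h : AnalyticAt ℂ f 0) : ∃ c, HC f c := by
  obtain ⟨p, hp⟩ := h
  refine ⟨p.coeff, ?_⟩
  rw [HC_iff]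
  rw [hasFPowerSeriesAt_iff] at hp
  filter_upwards [hp] with z hz
  simpa [mul_comm] using hz

lemma HC.const (a : ℂ) : HC (fun _ => a) (fun k => if k = 0 then a else 0) := by
  rw [HC_iff]
  refine Eventually.of_forall fun z => ?_
  have h0 : (fun n : ℕ => (if n = 0 then a else 0) * z ^ n)
      = fun n : ℕ => if n = 0 then a else 0 := by
    funext n; split <;> simp [*]
  rw [h0]
  exact hasSum_ite_eq 0 a

lemma HC.add {f g : ℂ → ℂ} {c d : ℕ → ℂ} (hf : HC f c) (hg : HC g d) :
    HC (fun z => f z + g z) (fun k => c k + d k) := by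
  rw [HC_iff] at hf hg ⊢
  filter_upwards [hf, hg] with z h1 h2
  simpa [add_mul] using h1.add h2

lemma HC.const_mul {g : ℂ → ℂ} {d : ℕ → ℂ} (a : ℂ) (hg : HC g d) :
    HC (fun z => a * g z) (fun k => a * d k) := by
  rw [HC_iff] at hg ⊢
  filter_upwards [hg] with z h1
  simpa [mul_assoc] using h1.mul_left a

lemma HC.zmul {g : ℂ → ℂ} {d : ℕ → ℂ} (hg : HC g d) :
    HC (fun z => z * g z) (fun k => if k = 0 then 0 else d (k - 1)) := by
  rw [HC_iff] at hg ⊢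
  filter_upwards [hg] with z h1
  have h2 : HasSum (fun n : ℕ =>
      (fun k : ℕ => (if k = 0 then 0 else d (k - 1)) * z ^ k) (Nat.succ n)) (z * g z) := by
    refine (h1.mul_left z).congr_fun fun n => ?_
    simp [pow_succ]; ring
  rwa [show (fun n : ℕ => (fun k : ℕ => (if k = 0 then 0 else d (k - 1)) * z ^ k) n.succ)
      = (fun k : ℕ => (if k = 0 then 0 else d (k - 1)) * z ^ k) ∘ Nat.succ from rfl,
    Function.Injective.hasSum_iff Nat.succ_injective] at h2
  intro x hx
  have : x = 0 := by
    rcases x with _ | m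
    · rfl
    · exact absurd ⟨m, rfl⟩ hx
  simp [this]

lemma HC.hasSum_and_summable {f : ℂ → ℂ} {c : ℕ → ℂ} (h : HC f c) :
    ∃ t : ℝ, 0 < t ∧ ∀ z : ℂ, ‖z‖ < t →
      Summable (fun n => ‖c n * z ^ n‖) ∧ HasSum (fun n => c n * z ^ n) (f z) := by
  obtain ⟨r, hp⟩ := h
  obtain ⟨t, ht0, htr⟩ := ENNReal.lt_iff_exists_nnreal_btwn.mp hp.r_pos
  refine ⟨t, by exact_mod_cast ht0, fun z hz => ?_⟩
  have hrad : (t : ENNReal) < (FormalMultilinearSeries.ofScalars ℂ c).radius :=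
    lt_of_lt_of_le htr hp.r_le
  have hsum := (FormalMultilinearSeries.ofScalars ℂ c).summable_norm_mul_pow hrad
  simp only [FormalMultilinearSeries.ofScalars_norm] at hsum
  constructor
  · refine Summable.of_nonneg_of_le (fun n => norm_nonneg _) (fun n => ?_) hsum
    rw [norm_mul, norm_pow]
    exact mul_le_mul_of_nonneg_left (pow_le_pow_left₀ (norm_nonneg z) hz.le n) (norm_nonneg _)
  · have hmem : z ∈ Metric.eball (0 : ℂ) r := by
      rw [Metric.mem_eball, edist_zero_right]
      exact lt_trans (ENNReal.coe_lt_coe.mpr (by exact_mod_cast hz)) htr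
    have := hp.hasSum hmem
    simp only [zero_add, FormalMultilinearSeries.apply_eq_pow_smul_coeff, ofScalars_coeff,
      smul_eq_mul] at this
    exact this.congr_fun fun n => mul_comm _ _

lemma HC.mul {f g : ℂ → ℂ} {c d : ℕ → ℂ} (hf : HC f c) (hg : HC g d) :
    HC (fun z => f z * g z)
      (fun n => ∑ k ∈ Finset.range (n + 1), c k * d (n - k)) := by
  obtain ⟨tf, htf, Hf⟩ := hf.hasSum_and_summable
  obtain ⟨tg, htg, Hg⟩ := hg.hasSum_and_summable
  rw [HC_iff]
  have hmem : Metric.ball (0 : ℂ) (min tf tg) ∈ 𝓝 (0 : ℂ) :=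
    Metric.ball_mem_nhds _ (lt_min htf htg)
  filter_upwards [hmem] with z hz
  rw [Metric.mem_ball, dist_zero_right, lt_min_iff] at hz
  obtain ⟨hfs, hfh⟩ := Hf z hz.1
  obtain ⟨hgs, hgh⟩ := Hg z hz.2
  have hS := summable_norm_sum_mul_range_of_summable_norm hfs hgs
  have htsum := tsum_mul_tsum_eq_tsum_sum_range_of_summable_norm hfs hgs
  rw [hfh.tsum_eq, hgh.tsum_eq] at htsum
  have hhs : HasSum (fun n => ∑ k ∈ Finset.range (n + 1),
      (c k * z ^ k) * (d (n - k) * z ^ (n - k))) (f z * g z) := by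
    rw [Summable.hasSum_iff hS.of_norm]
    exact htsum.symm
  refine hhs.congr_fun fun n => ?_
  rw [Finset.sum_mul]
  refine Finset.sum_congr rfl fun k hk => ?_
  rw [Finset.mem_range, Nat.lt_succ_iff] at hk
  rw [show (c k * z ^ k) * (d (n - k) * z ^ (n - k)) = c k * d (n - k) * (z ^ k * z ^ (n - k))
    by ring, ← pow_add, Nat.add_sub_cancel' hk]


/-- upper triangular Toeplitz matrix from sequence -/
def toepl (m : ℕ) (a : ℕ → ℂ) : Matrix (Fin m) (Fin m) ℂ :=
  Matrix.of fun j k : Fin m =>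
    if (j : ℕ) ≤ (k : ℕ) then a ((k : ℕ) - (j : ℕ)) else 0

lemma toepl_mul (m : ℕ) (a b : ℕ → ℂ) :
    toepl m a * toepl m b =
      toepl m (fun n => ∑ i ∈ Finset.range (n + 1), a i * b (n - i)) := by
  ext j k
  rw [Matrix.mul_apply]
  simp only [toepl, Matrix.of_apply]
  by_cases hjk : (j : ℕ) ≤ (k : ℕ)
  · rw [if_pos hjk]
    have hsum : ∀ l : Fin m,
        (if (j : ℕ) ≤ (l : ℕ) then a ((l : ℕ) - (j : ℕ)) else 0) *
          (if (l : ℕ) ≤ (k : ℕ) then b ((k : ℕ) - (l : ℕ)) else 0)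
        = (fun l : ℕ => (if (j : ℕ) ≤ l then a (l - (j : ℕ)) else 0) *
          (if l ≤ (k : ℕ) then b ((k : ℕ) - l) else 0)) (l : ℕ) := fun l => rfl
    calc (∑ l : Fin m, (if (j : ℕ) ≤ (l : ℕ) then a ((l : ℕ) - (j : ℕ)) else 0) *
          (if (l : ℕ) ≤ (k : ℕ) then b ((k : ℕ) - (l : ℕ)) else 0))
        = ∑ l ∈ Finset.range m, (if (j : ℕ) ≤ l then a (l - (j : ℕ)) else 0) *
          (if l ≤ (k : ℕ) then b ((k : ℕ) - l) else 0) := by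
          rw [← Fin.sum_univ_eq_sum_range]
      _ = ∑ l ∈ Finset.Icc (j : ℕ) (k : ℕ), (if (j : ℕ) ≤ l then a (l - (j : ℕ)) else 0) *
          (if l ≤ (k : ℕ) then b ((k : ℕ) - l) else 0) := by
          refine (Finset.sum_subset ?_ ?_).symm
          · intro l hl
            rw [Finset.mem_Icc] at hl
            rw [Finset.mem_range]
            exact lt_of_le_of_lt hl.2 k.isLt
          · intro l _ hl
            rw [Finset.mem_Icc, not_and_or] at hl
            rcases hl with h | h
            · rw [if_neg h, zero_mul]
            · rw [if_neg h, mul_zero]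
      _ = ∑ i ∈ Finset.range ((k : ℕ) - (j : ℕ) + 1), a i * b ((k : ℕ) - (j : ℕ) - i) := by
          refine Finset.sum_nbij' (fun l => l - (j : ℕ)) (fun i => (j : ℕ) + i)
            ?_ ?_ ?_ ?_ ?_ <;>
              intro x hx <;> simp only [Finset.mem_Icc, Finset.mem_range] at hx ⊢ <;>
              try omega
          rw [if_pos hx.1, if_pos hx.2,
            show (k : ℕ) - (j : ℕ) - (x - (j : ℕ)) = (k : ℕ) - x by omega]
  · rw [if_neg hjk]
    refine Finset.sum_eq_zero fun l _ => ?_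
    by_cases h1 : (j : ℕ) ≤ (l : ℕ)
    · rw [if_neg (show ¬((l : ℕ) ≤ (k : ℕ)) by omega), mul_zero]
    · rw [if_neg h1, zero_mul]

lemma toepl_one (m : ℕ) : toepl m (fun n => if n = 0 then 1 else 0) = 1 := by
  ext j k
  simp only [toepl, Matrix.of_apply, Matrix.one_apply]
  by_cases h2 : j = k
  · subst h2; simp
  · rw [if_neg h2]
    have hne : (j : ℕ) ≠ (k : ℕ) := fun hc => h2 (Fin.ext hc)
    by_cases h : (j : ℕ) ≤ (k : ℕ)
    · rw [if_pos h, if_neg (by omega)]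
    · rw [if_neg h]

lemma toepl_sub (m : ℕ) (a b : ℕ → ℂ) :
    toepl m (fun n => a n - b n) = toepl m a - toepl m b := by
  ext j k
  simp only [toepl, Matrix.of_apply, Matrix.sub_apply]
  split <;> simp

lemma toepl_smul (m : ℕ) (x : ℂ) (a : ℕ → ℂ) :
    toepl m (fun n => x * a n) = x • toepl m a := by
  ext j k
  simp only [toepl, Matrix.of_apply, Matrix.smul_apply, smul_eq_mul]
  split <;> simp

lemma toepl_coeff_mul (m : ℕ) (S T : PowerSeries ℂ) :
    toepl m (fun n => PowerSeries.coeff n (S * T)) =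
      toepl m (fun n => PowerSeries.coeff n S) * toepl m (fun n => PowerSeries.coeff n T) := by
  have h : (fun n => PowerSeries.coeff n (S * T))
      = fun n => ∑ i ∈ Finset.range (n + 1),
          PowerSeries.coeff i S * PowerSeries.coeff (n - i) T := by
    funext n
    rw [PowerSeries.coeff_mul, Finset.Nat.sum_antidiagonal_eq_sum_range_succ_mk]
  rw [h, toepl_mul]


open scoped ComplexOrder

local notation "CLM" => Matrix.toEuclideanCLM (𝕜 := ℂ)

lemma WithLp.equiv_symm_pi_apply {ι : Type*} (x : ι → ℂ) (i : ι) :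
    ((WithLp.equiv 2 (ι → ℂ)).symm x).ofLp i = x i := rfl

lemma Matrix.toEuclideanCLM_piLp_equiv_symm {m : ℕ} (A : Matrix (Fin m) (Fin m) ℂ) (x : Fin m → ℂ) :
    CLM A ((WithLp.equiv 2 (Fin m → ℂ)).symm x) = (WithLp.equiv 2 (Fin m → ℂ)).symm (Matrix.toLin' A x) := rfl

-- column norm bound
lemma col_norm_le {m : ℕ} (A : Matrix (Fin m) (Fin m) ℂ) (k : Fin m) :
    Real.sqrt (∑ j, ‖A j k‖ ^ 2) ≤ ‖CLM A‖ := by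
  have h1 : ‖CLM A ((WithLp.equiv 2 _).symm (Pi.single k 1))‖
      ≤ ‖CLM A‖ * ‖(WithLp.equiv 2 (Fin m → ℂ)).symm (Pi.single k 1)‖ :=
    (CLM A).le_opNorm _
  have h2 : ‖(WithLp.equiv 2 (Fin m → ℂ)).symm (Pi.single k (1:ℂ))‖ = 1 := by
    rw [EuclideanSpace.norm_eq]
    have : ∀ j, ‖(WithLp.equiv 2 (Fin m → ℂ)).symm (Pi.single k (1:ℂ)) j‖ ^ 2
        = if j = k then 1 else 0 := by
      intro j
      by_cases hj : j = k <;> simp [WithLp.equiv_symm_pi_apply, Pi.single_apply, hj]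
    rw [Finset.sum_congr rfl fun j _ => this j]
    simp
  have h3 : CLM A ((WithLp.equiv 2 _).symm (Pi.single k 1))
      = (WithLp.equiv 2 (Fin m → ℂ)).symm (fun j => A j k) := by
    rw [Matrix.toEuclideanCLM_piLp_equiv_symm]
    congr 1
    rw [Matrix.toLin'_apply, Matrix.mulVec_single]
    funext j; simp
  rw [h3, h2, mul_one] at h1
  refine le_trans (le_of_eq ?_) h1
  rw [EuclideanSpace.norm_eq]
  congr 1

lemma entry_norm_le {m : ℕ} (A : Matrix (Fin m) (Fin m) ℂ) (j k : Fin m) :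
    ‖A j k‖ ≤ ‖CLM A‖ := by
  refine le_trans ?_ (col_norm_le A k)
  rw [show ‖A j k‖ = Real.sqrt (‖A j k‖ ^ 2) by rw [Real.sqrt_sq (norm_nonneg _)]]
  refine Real.sqrt_le_sqrt ?_
  exact Finset.single_le_sum (f := fun j => ‖A j k‖ ^ 2)
    (fun i _ => sq_nonneg _) (Finset.mem_univ j)

-- pointwise Möbius contraction inequality
lemma mobius_pointwise {m : ℕ} (T : EuclideanSpace ℂ (Fin m) →L[ℂ] EuclideanSpace ℂ (Fin m))
    (hT : ‖T‖ ≤ 1) (a0 : ℂ) (ha0 : ‖a0‖ < 1) (x : EuclideanSpace ℂ (Fin m)) :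
    ‖(T - a0 • 1) x‖ ≤
      ‖((1 : EuclideanSpace ℂ (Fin m) →L[ℂ] EuclideanSpace ℂ (Fin m))
        - (starRingEnd ℂ a0) • T) x‖ := by
  have hTx : ‖T x‖ ≤ ‖x‖ := by
    calc ‖T x‖ ≤ ‖T‖ * ‖x‖ := T.le_opNorm x
    _ ≤ 1 * ‖x‖ := by gcongr
    _ = ‖x‖ := one_mul _
  have e1 : (T - a0 • 1) x = T x - a0 • x := by
    simp [ContinuousLinearMap.sub_apply]
  have e2 : ((1 : EuclideanSpace ℂ (Fin m) →L[ℂ] EuclideanSpace ℂ (Fin m))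
      - (starRingEnd ℂ a0) • T) x = x - (starRingEnd ℂ a0) • T x := by
    simp [ContinuousLinearMap.sub_apply]
  rw [e1, e2]
  have key : ‖T x - a0 • x‖ ^ 2 ≤ ‖x - (starRingEnd ℂ a0) • T x‖ ^ 2 := by
    have hs1 : ‖T x - a0 • x‖ ^ 2
        = ‖T x‖ ^ 2 - 2 * Complex.re (a0 * (starRingEnd ℂ) (inner ℂ x (T x))) + ‖a0‖ ^ 2 * ‖x‖ ^ 2 := by
      rw [norm_sub_sq (𝕜 := ℂ)]
      rw [inner_smul_right, inner_conj_symm]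
      rw [norm_smul]
      ring_nf
      simp [Complex.mul_re]
      ring
    have hs2 : ‖x - (starRingEnd ℂ a0) • T x‖ ^ 2
        = ‖x‖ ^ 2 - 2 * Complex.re ((starRingEnd ℂ a0) * (inner ℂ x (T x) : ℂ))
          + ‖a0‖ ^ 2 * ‖T x‖ ^ 2 := by
      rw [norm_sub_sq (𝕜 := ℂ)]
      rw [inner_smul_right, norm_smul]
      have h9 : ‖(starRingEnd ℂ) a0‖ = ‖a0‖ := RCLike.norm_conj a0
      rw [h9]
      simp only [RCLike.re_to_complex]
      ring
    have hre : Complex.re (a0 * (starRingEnd ℂ) (inner ℂ x (T x)))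
        = Complex.re ((starRingEnd ℂ a0) * (inner ℂ x (T x) : ℂ)) := by
      have : a0 * (starRingEnd ℂ) (inner ℂ x (T x))
          = (starRingEnd ℂ) ((starRingEnd ℂ a0) * (inner ℂ x (T x) : ℂ)) := by
        rw [map_mul]; simp
      rw [this, Complex.conj_re]
    have h1 : ‖T x‖ ^ 2 ≤ ‖x‖ ^ 2 := pow_le_pow_left₀ (norm_nonneg _) hTx 2
    have h2 : ‖a0‖ ^ 2 ≤ 1 := by nlinarith [norm_nonneg a0]
    have h3 : 0 ≤ (1 - ‖a0‖ ^ 2) * (‖x‖ ^ 2 - ‖T x‖ ^ 2) :=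
      mul_nonneg (by linarith) (by linarith)
    rw [hs1, hs2, hre]
    nlinarith [h3]
  calc ‖T x - a0 • x‖ = Real.sqrt (‖T x - a0 • x‖ ^ 2) :=
        (Real.sqrt_sq (norm_nonneg _)).symm
    _ ≤ Real.sqrt (‖x - (starRingEnd ℂ a0) • T x‖ ^ 2) := Real.sqrt_le_sqrt key
    _ = ‖x - (starRingEnd ℂ a0) • T x‖ := Real.sqrt_sq (norm_nonneg _)

set_option maxHeartbeats 1000000 in
set_option synthInstance.maxHeartbeats 400000 in
-- main contraction transfer
lemma mobius_norm_le {m : ℕ} {A B : Matrix (Fin m) (Fin m) ℂ} {a0 : ℂ}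
    (hA : ‖CLM A‖ ≤ 1) (ha0 : ‖a0‖ < 1)
    (hB : B * (1 - (starRingEnd ℂ a0) • A) = A - a0 • 1) :
    ‖CLM B‖ ≤ 1 := by
  set T := CLM A with hT
  set S : EuclideanSpace ℂ (Fin m) →L[ℂ] EuclideanSpace ℂ (Fin m) :=
    (1 : EuclideanSpace ℂ (Fin m) →L[ℂ] EuclideanSpace ℂ (Fin m))
      - (starRingEnd ℂ a0) • T with hS
  have hmap : (CLM B) * S = T - a0 • (1 : EuclideanSpace ℂ (Fin m) →L[ℂ] EuclideanSpace ℂ (Fin m)) := by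
    have := congrArg (fun M => CLM M) hB
    simpa [hS, map_mul, map_sub, map_smul, map_one] using this
  have hnormsmul : ‖(starRingEnd ℂ a0) • T‖ < 1 := by
    calc ‖(starRingEnd ℂ a0) • T‖ ≤ ‖(starRingEnd ℂ a0)‖ * ‖T‖ :=
          ContinuousLinearMap.opNorm_smul_le _ _
    _ = ‖a0‖ * ‖T‖ := by rw [RCLike.norm_conj]
    _ ≤ ‖a0‖ * 1 := mul_le_mul_of_nonneg_left hA (norm_nonneg _)
    _ = ‖a0‖ := mul_one _
    _ < 1 := ha0
  set u : (EuclideanSpace ℂ (Fin m) →L[ℂ] EuclideanSpace ℂ (Fin m))ˣ :=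
    Units.oneSub _ hnormsmul with hu
  refine ContinuousLinearMap.opNorm_le_bound _ zero_le_one fun y => ?_
  set x := (↑u⁻¹ : EuclideanSpace ℂ (Fin m) →L[ℂ] EuclideanSpace ℂ (Fin m)) y with hx
  have hxy : S x = y := by
    have h1 : (↑u * ↑u⁻¹ : EuclideanSpace ℂ (Fin m) →L[ℂ] EuclideanSpace ℂ (Fin m)) y = y := by
      rw [u.mul_inv]; rfl
    rw [ContinuousLinearMap.mul_apply] at h1
    exact h1
  calc ‖CLM B y‖ = ‖(T - a0 • 1) x‖ := by
        rw [← hxy, ← ContinuousLinearMap.mul_apply, hmap]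
    _ ≤ ‖S x‖ := mobius_pointwise T hA a0 ha0 x
    _ = ‖y‖ := by rw [hxy]
    _ ≤ 1 * ‖y‖ := (one_mul _).symm.le


set_option maxHeartbeats 1000000


lemma shift_norm_le {m : ℕ} {b : ℕ → ℂ} (hb0 : b 0 = 0) :
    ‖CLM (toepl m (fun k => b (k + 1)))‖ ≤ ‖CLM (toepl (m + 1) b)‖ := by
  refine ContinuousLinearMap.opNorm_le_bound _ (norm_nonneg _) fun y => ?_
  set v : Fin m → ℂ := WithLp.equiv 2 (Fin m → ℂ) y with hv
  set w : Fin (m + 1) → ℂ := Fin.cons 0 v with hw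
  have hmv : (toepl (m + 1) b).mulVec w
      = Fin.snoc ((toepl m (fun k => b (k + 1))).mulVec v) 0 := by
    funext j
    refine Fin.lastCases ?_ (fun j' => ?_) j
    · rw [Fin.snoc_last, Matrix.mulVec, dotProduct]
      refine Finset.sum_eq_zero fun l _ => ?_
      refine Fin.cases ?_ (fun i => ?_) l
      · simp [hw]
      · rw [hw, Fin.cons_succ]
        simp only [toepl, Matrix.of_apply]
        rcases le_or_gt (m : ℕ) ((i : ℕ) + 1) with h | h
        · have : (i : ℕ) + 1 = m := by
            have := i.isLt; omega
          rw [if_pos (by simp [Fin.val_last]; omega)]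
          simp only [Fin.val_last, Fin.val_succ, this]
          rw [show m - m = 0 by omega, hb0, zero_mul]
        · rw [if_neg (by simp [Fin.val_last]; omega), zero_mul]
    · rw [Fin.snoc_castSucc, Matrix.mulVec, Matrix.mulVec, dotProduct, dotProduct,
        Fin.sum_univ_succ]
      rw [hw, Fin.cons_zero, mul_zero, zero_add]
      refine Finset.sum_congr rfl fun i _ => ?_
      rw [Fin.cons_succ]
      simp only [toepl, Matrix.of_apply, Fin.coe_castSucc, Fin.val_succ]
      congr 1
      rcases le_or_gt ((j' : ℕ)) ((i : ℕ)) with h | h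
      · rw [if_pos (by omega), if_pos h, show (i : ℕ) + 1 - (j' : ℕ) = (i : ℕ) - (j' : ℕ) + 1 by omega]
      · rcases eq_or_lt_of_le (show (i : ℕ) + 1 ≤ (j' : ℕ) by omega) with h2 | h2
        · rw [if_pos (by omega), if_neg (by omega), ← h2, show (i:ℕ)+1-((i:ℕ)+1) = 0 by omega, hb0]
        · rw [if_neg (by omega), if_neg (by omega)]
  have happly : CLM (toepl (m + 1) b) ((WithLp.equiv 2 (Fin (m+1) → ℂ)).symm w)
      = (WithLp.equiv 2 (Fin (m+1) → ℂ)).symm (Fin.snoc ((toepl m (fun k => b (k + 1))).mulVec v) 0) := by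
    rw [Matrix.toEuclideanCLM_piLp_equiv_symm, Matrix.toLin'_apply, hmv]
  have hnw : ‖(WithLp.equiv 2 (Fin (m+1) → ℂ)).symm w‖ = ‖y‖ := by
    rw [EuclideanSpace.norm_eq, EuclideanSpace.norm_eq]
    congr 1
    simp only [WithLp.equiv_symm_pi_apply]
    rw [Fin.sum_univ_succ]
    rw [hw, Fin.cons_zero]
    simp only [norm_zero, ne_eq, OfNat.ofNat_ne_zero, not_false_eq_true, zero_pow, zero_add]
    refine Finset.sum_congr rfl fun i _ => ?_
    rw [Fin.cons_succ]
    rfl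
  have hout : ‖(WithLp.equiv 2 (Fin (m+1) → ℂ)).symm
      (Fin.snoc ((toepl m (fun k => b (k + 1))).mulVec v) (0:ℂ))‖
      = ‖CLM (toepl m (fun k => b (k + 1))) y‖ := by
    have hy : y = (WithLp.equiv 2 (Fin m → ℂ)).symm v := rfl
    rw [hy, Matrix.toEuclideanCLM_piLp_equiv_symm, Matrix.toLin'_apply]
    rw [EuclideanSpace.norm_eq, EuclideanSpace.norm_eq]
    congr 1
    simp only [WithLp.equiv_symm_pi_apply]
    rw [Fin.sum_univ_castSucc]
    simp only [Fin.snoc_castSucc, Fin.snoc_last, norm_zero, ne_eq, OfNat.ofNat_ne_zero,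
      not_false_eq_true, zero_pow, add_zero]
  calc ‖CLM (toepl m (fun k => b (k + 1))) y‖
      = ‖CLM (toepl (m + 1) b) ((WithLp.equiv 2 (Fin (m+1) → ℂ)).symm w)‖ := by
        rw [happly, hout]
    _ ≤ ‖CLM (toepl (m + 1) b)‖ * ‖(WithLp.equiv 2 (Fin (m+1) → ℂ)).symm w‖ :=
        (CLM (toepl (m + 1) b)).le_opNorm _
    _ = ‖CLM (toepl (m + 1) b)‖ * ‖y‖ := by rw [hnw]


lemma conv_w (c e : ℕ → ℂ) (t : ℂ) (k : ℕ) :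
    ∑ i ∈ Finset.range (k + 1), c i * ((if k - i = 0 then 1 else 0) + t * e (k - i))
      = c k + t * ∑ i ∈ Finset.range (k + 1), c i * e (k - i) := by
  simp only [mul_add, Finset.sum_add_distrib]
  congr 1
  · rw [Finset.sum_eq_single_of_mem k (Finset.self_mem_range_succ k)]
    · rw [Nat.sub_self, if_pos rfl, mul_one]
    · intro i hi hik
      rw [Finset.mem_range] at hi
      rw [if_neg (by omega), mul_zero]
  · rw [Finset.mul_sum]
    exact Finset.sum_congr rfl fun i _ => by ring

lemma rec_eq (a0 t : ℂ) (cseq aseq e b : ℕ → ℂ) (n : ℕ)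
    (he : ∀ j, j ≤ n → e j = b j) (hb0 : b 0 = 0)
    (hc : ∀ k, cseq k + t * ∑ i ∈ Finset.range (k + 1), cseq i * e (k - i)
      = (if k = 0 then a0 else 0) + e k)
    (ha : ∀ k, aseq k + t * ∑ i ∈ Finset.range (k + 1), aseq i * b (k - i)
      = (if k = 0 then a0 else 0) + b k) :
    ∀ k, k ≤ n → cseq k = aseq k := by
  intro k
  induction k using Nat.strong_induction_on with
  | _ k IH =>
    intro hk
    have h1 := hc k
    have h2 := ha k
    rw [Finset.sum_range_succ] at h1 h2
    rw [Nat.sub_self] at h1 h2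
    have he0 : e 0 = 0 := by rw [he 0 (Nat.zero_le n), hb0]
    rw [he0, mul_zero, add_zero] at h1
    rw [hb0, mul_zero, add_zero] at h2
    have hsum : (∑ i ∈ Finset.range k, cseq i * e (k - i))
        = ∑ i ∈ Finset.range k, aseq i * b (k - i) := by
      refine Finset.sum_congr rfl fun i hi => ?_
      rw [Finset.mem_range] at hi
      rw [IH i hi (le_trans (le_of_lt hi) hk), he (k - i) (le_trans (Nat.sub_le _ _) hk)]
    have hek : e k = b k := he k hk
    rw [hsum, hek] at h1
    linear_combination h1 - h2

lemma mobius_abs_le (a0 w : ℂ) (ha : ‖a0‖ ≤ 1) (hw : ‖w‖ ≤ 1) :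
    ‖a0 + w‖ ≤ ‖1 + (starRingEnd ℂ) a0 * w‖ := by
  have hkey : Complex.normSq (1 + (starRingEnd ℂ) a0 * w) - Complex.normSq (a0 + w)
      = (1 - Complex.normSq a0) * (1 - Complex.normSq w) := by
    simp only [Complex.normSq_apply, Complex.add_re, Complex.add_im, Complex.mul_re,
      Complex.mul_im, Complex.one_re, Complex.one_im, Complex.conj_re, Complex.conj_im]
    ring
  have h1 : Complex.normSq a0 ≤ 1 := by
    rw [← Complex.sq_norm]
    nlinarith [norm_nonneg a0]
  have h2 : Complex.normSq w ≤ 1 := by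
    rw [← Complex.sq_norm]
    nlinarith [norm_nonneg w]
  have h3 : Complex.normSq (a0 + w) ≤ Complex.normSq (1 + (starRingEnd ℂ) a0 * w) := by
    nlinarith [hkey]
  calc ‖a0 + w‖ = Real.sqrt (Complex.normSq (a0 + w)) := by
        rw [Complex.norm_def]
    _ ≤ Real.sqrt (Complex.normSq (1 + (starRingEnd ℂ) a0 * w)) := Real.sqrt_le_sqrt h3
    _ = ‖1 + (starRingEnd ℂ) a0 * w‖ := by rw [Complex.norm_def]
section Key

open PowerSeries

theorem key : ∀ n : ℕ, ∀ a : ℕ → ℂ,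
    ‖Matrix.toEuclideanCLM (𝕜 := ℂ) (toepl n a)‖ ≤ 1 →
    ∃ f : ℂ → ℂ, ∃ c : ℕ → ℂ,
      DifferentiableOn ℂ f (Metric.ball 0 1) ∧
      (∀ z ∈ Metric.ball (0 : ℂ) 1, ‖f z‖ ≤ 1) ∧ HC f c ∧ ∀ k < n, c k = a k := by
  intro n
  induction n with
  | zero =>
    intro a _
    exact ⟨fun _ => 0, fun k => if k = 0 then 0 else 0, differentiableOn_const 0,
      by intro z _; simp, HC.const 0, by intro k hk; omega⟩
  | succ n IH =>
    intro a hA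
    set sa : ℂ := (starRingEnd ℂ) (a 0) with hsa
    have hentry : toepl (n + 1) a 0 0 = a 0 := by simp [toepl]
    have ha0 : ‖a 0‖ ≤ 1 := by
      calc ‖a 0‖ = ‖toepl (n + 1) a 0 0‖ := by rw [hentry]
        _ ≤ ‖Matrix.toEuclideanCLM (𝕜 := ℂ) (toepl (n + 1) a)‖ := entry_norm_le _ 0 0
        _ ≤ 1 := hA
    by_cases hlt : ‖a 0‖ < 1
    · -- main case |a 0| < 1
      set u : PowerSeries ℂ := 1 - PowerSeries.C sa * PowerSeries.mk a with hu
      have hu0 : PowerSeries.constantCoeff u ≠ 0 := by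
        rw [hu]
        simp only [map_sub, map_one, map_mul, PowerSeries.constantCoeff_C,
          PowerSeries.constantCoeff_mk]
        intro h
        have h2 : sa * a 0 = 1 := by linear_combination -h
        have h3 : ‖sa * a 0‖ = 1 := by rw [h2, norm_one]
        rw [norm_mul, hsa, RCLike.norm_conj] at h3
        nlinarith [norm_nonneg (a 0)]
      set b : ℕ → ℂ := fun k =>
        PowerSeries.coeff k ((PowerSeries.mk a - PowerSeries.C (a 0)) * u⁻¹) with hb
      have hmkb : PowerSeries.mk b = (PowerSeries.mk a - PowerSeries.C (a 0)) * u⁻¹ :=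
        PowerSeries.ext fun k => by rw [PowerSeries.coeff_mk]
      have hbu : PowerSeries.mk b * u = PowerSeries.mk a - PowerSeries.C (a 0) := by
        rw [hmkb, mul_assoc, PowerSeries.inv_mul_cancel u hu0, mul_one]
      have hb0 : b 0 = 0 := by
        rw [hb]
        simp only [PowerSeries.coeff_zero_eq_constantCoeff_apply, map_mul, map_sub,
          PowerSeries.constantCoeff_mk, PowerSeries.constantCoeff_C, sub_self, zero_mul]
      have harec : PowerSeries.mk a * (1 + PowerSeries.C sa * PowerSeries.mk b)
          = PowerSeries.C (a 0) + PowerSeries.mk b := by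
        rw [hu] at hbu
        linear_combination -hbu
      have haconv : ∀ k, (∑ i ∈ Finset.range (k + 1),
          a i * ((if k - i = 0 then (1:ℂ) else 0) + sa * b (k - i)))
          = (if k = 0 then a 0 else 0) + b k := by
        intro k
        have h5 := congrArg (PowerSeries.coeff k) harec
        rw [PowerSeries.coeff_mul, Finset.Nat.sum_antidiagonal_eq_sum_range_succ_mk] at h5
        simpa only [map_add, PowerSeries.coeff_one, PowerSeries.coeff_C_mul,
          PowerSeries.coeff_mk, PowerSeries.coeff_C] using h5
      have ha2 : ∀ k, a k + sa * ∑ i ∈ Finset.range (k + 1), a i * b (k - i)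
          = (if k = 0 then a 0 else 0) + b k := by
        intro k
        rw [← conv_w a b sa k]
        exact haconv k
      -- matrix identities
      have hseq : (fun k => PowerSeries.coeff k u)
          = fun k => (if k = 0 then (1:ℂ) else 0) - sa * a k := by
        funext k
        rw [hu]
        simp [PowerSeries.coeff_one, PowerSeries.coeff_C_mul, PowerSeries.coeff_mk]
      have hMA : toepl (n + 1) (fun k => PowerSeries.coeff k u)
          = (1 : Matrix (Fin (n+1)) (Fin (n+1)) ℂ) - sa • toepl (n + 1) a := by
        rw [hseq, toepl_sub, toepl_one, toepl_smul]
      have hBM : toepl (n + 1) b * ((1 : Matrix (Fin (n+1)) (Fin (n+1)) ℂ) - sa • toepl (n + 1) a)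
          = toepl (n + 1) a - a 0 • 1 := by
        have h3 := toepl_coeff_mul (n + 1) (PowerSeries.mk b) u
        rw [hbu] at h3
        have e1 : (fun k => PowerSeries.coeff k (PowerSeries.mk b)) = b :=
          funext fun k => PowerSeries.coeff_mk k b
        have e2 : (fun k => PowerSeries.coeff k (PowerSeries.mk a - PowerSeries.C (a 0)))
            = fun k => a k - a 0 * (if k = 0 then 1 else 0) := by
          funext k
          simp only [map_sub, PowerSeries.coeff_mk, PowerSeries.coeff_C]
          congr 1
          split <;> simp
        rw [e1, hMA, e2, toepl_sub, toepl_smul, toepl_one] at h3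
        exact h3.symm
      have hBnorm : ‖Matrix.toEuclideanCLM (𝕜 := ℂ) (toepl (n + 1) b)‖ ≤ 1 :=
        mobius_norm_le hA hlt hBM
      have hCnorm : ‖Matrix.toEuclideanCLM (𝕜 := ℂ) (toepl n (fun k => b (k + 1)))‖ ≤ 1 :=
        le_trans (shift_norm_le hb0) hBnorm
      obtain ⟨g, d, hgdiff, hgbd, hgHC, hgco⟩ := IH (fun k => b (k + 1)) hCnorm
      set e : ℕ → ℂ := fun k => if k = 0 then 0 else d (k - 1) with hedef
      have hhHC : HC (fun z => z * g z) e := hgHC.zmul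
      have he : ∀ j, j ≤ n → e j = b j := by
        intro j hj
        rcases j with _ | j'
        · rw [hedef]; simp [hb0]
        · rw [hedef]
          simp only [Nat.succ_ne_zero, if_false, Nat.succ_sub_one]
          exact hgco j' (by omega)
      set denom : ℂ → ℂ := fun z => 1 + sa * (z * g z) with hddef
      have hdenHC : HC denom (fun k => (if k = 0 then (1:ℂ) else 0) + sa * e k) :=
        (HC.const 1).add (hhHC.const_mul sa)
      have hball : ∀ z : ℂ, z ∈ Metric.ball (0:ℂ) 1 → ‖z‖ < 1 := by
        intro z hz
        rwa [Metric.mem_ball, dist_zero_right] at hz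
      have hgz1 : ∀ z ∈ Metric.ball (0:ℂ) 1, ‖z * g z‖ < 1 := by
        intro z hz
        calc ‖z * g z‖ = ‖z‖ * ‖g z‖ := norm_mul _ _
          _ ≤ ‖z‖ * 1 := mul_le_mul_of_nonneg_left (hgbd z hz) (norm_nonneg _)
          _ = ‖z‖ := mul_one _
          _ < 1 := hball z hz
      have hden_ne : ∀ z ∈ Metric.ball (0:ℂ) 1, denom z ≠ 0 := by
        intro z hz h0
        have h1 : sa * (z * g z) = -1 := by
          rw [hddef] at h0
          linear_combination h0
        have h2 : ‖sa * (z * g z)‖ = 1 := by rw [h1, norm_neg, norm_one]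
        rw [norm_mul, hsa, RCLike.norm_conj] at h2
        have h3 : ‖a 0‖ * ‖z * g z‖ ≤ 1 * ‖z * g z‖ :=
          mul_le_mul_of_nonneg_right ha0 (norm_nonneg _)
        have h4 := hgz1 z hz
        nlinarith
      set f : ℂ → ℂ := fun z => (a 0 + z * g z) / denom z with hfdef
      have hfdiff : DifferentiableOn ℂ f (Metric.ball 0 1) := by
        refine DifferentiableOn.div ?_ ?_ hden_ne
        · exact (differentiableOn_const _).add (differentiableOn_id.mul hgdiff)
        · exact (differentiableOn_const _).add
            ((differentiableOn_const _).mul (differentiableOn_id.mul hgdiff))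
      have hfbd : ∀ z ∈ Metric.ball (0:ℂ) 1, ‖f z‖ ≤ 1 := by
        intro z hz
        rw [hfdef]
        simp only [norm_div]
        rw [div_le_one (norm_pos_iff.mpr (hden_ne z hz))]
        calc ‖a 0 + z * g z‖ ≤ ‖1 + (starRingEnd ℂ) (a 0) * (z * g z)‖ :=
              mobius_abs_le (a 0) (z * g z) ha0 (le_of_lt (hgz1 z hz))
          _ = ‖denom z‖ := by rw [hddef, hsa]
      have hfan : AnalyticAt ℂ f 0 :=
        hfdiff.analyticAt (Metric.isOpen_ball.mem_nhds (by simp))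
      obtain ⟨c, hcHC⟩ := HC.analytic hfan
      have hprodHC : HC (fun z => f z * denom z)
          (fun k => ∑ i ∈ Finset.range (k + 1),
            c i * ((if k - i = 0 then (1:ℂ) else 0) + sa * e (k - i))) := hcHC.mul hdenHC
      have heqf : ∀ᶠ z in nhds (0:ℂ), f z * denom z = a 0 + z * g z := by
        filter_upwards [Metric.isOpen_ball.mem_nhds
          (show (0:ℂ) ∈ Metric.ball (0:ℂ) 1 by simp)] with z hz
        rw [hfdef]
        exact div_mul_cancel₀ _ (hden_ne z hz)
      have hsumHC : HC (fun z => a 0 + z * g z)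
          (fun k => (if k = 0 then a 0 else 0) + e k) := (HC.const (a 0)).add hhHC
      have hcoefeq := (hprodHC.congr heqf).unique hsumHC
      have hc2 : ∀ k, c k + sa * ∑ i ∈ Finset.range (k + 1), c i * e (k - i)
          = (if k = 0 then a 0 else 0) + e k := by
        intro k
        have h6 := congrFun hcoefeq k
        rwa [conv_w c e sa k] at h6
      have hfinal := rec_eq (a 0) sa c a e b n he hb0 hc2 ha2
      exact ⟨f, c, hfdiff, hfbd, hcHC, fun k hk => hfinal k (Nat.lt_succ_iff.mp hk)⟩
    · -- case |a 0| = 1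
      have h1 : ‖a 0‖ = 1 := le_antisymm ha0 (not_lt.mp hlt)
      have hcol := col_norm_le (toepl (n + 1) a) (Fin.last n)
      have hnn : (0:ℝ) ≤ ∑ j, ‖toepl (n + 1) a j (Fin.last n)‖ ^ 2 :=
        Finset.sum_nonneg fun j _ => sq_nonneg _
      have hsumle : (∑ j, ‖toepl (n + 1) a j (Fin.last n)‖ ^ 2) ≤ 1 := by
        have h2 := le_trans hcol hA
        nlinarith [Real.sq_sqrt hnn, Real.sqrt_nonneg
          (∑ j, ‖toepl (n + 1) a j (Fin.last n)‖ ^ 2)]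
      have hent : ∀ j : Fin (n + 1), toepl (n + 1) a j (Fin.last n) = a (n - (j:ℕ)) := by
        intro j
        simp only [toepl, Matrix.of_apply, Fin.val_last]
        rw [if_pos (by omega)]
      rw [Finset.sum_congr rfl fun j _ => by rw [hent j]] at hsumle
      rw [Fin.sum_univ_castSucc] at hsumle
      simp only [Fin.coe_castSucc, Fin.val_last, Nat.sub_self, h1, one_pow] at hsumle
      have hzero : ∀ k, 1 ≤ k → k ≤ n → a k = 0 := by
        intro k hk1 hkn
        have hterm : ∀ j : Fin n, (0:ℝ) ≤ ‖a (n - (j:ℕ))‖ ^ 2 := fun j => sq_nonneg _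
        have hsum0 : (∑ j : Fin n, ‖a (n - (j:ℕ))‖ ^ 2) ≤ 0 := by linarith
        have hall := (Finset.sum_eq_zero_iff_of_nonneg fun j _ => hterm j).mp
          (le_antisymm hsum0 (Finset.sum_nonneg fun j _ => hterm j))
        have hj : n - k < n := by omega
        have := hall ⟨n - k, hj⟩ (Finset.mem_univ _)
        rw [show n - (((⟨n - k, hj⟩ : Fin n)):ℕ) = k by simp; omega] at this
        have := sq_eq_zero_iff.mp this
        exact norm_eq_zero.mp this
      refine ⟨fun _ => a 0, fun k => if k = 0 then a 0 else 0, differentiableOn_const _,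
        ?_, HC.const (a 0), ?_⟩
      · intro z _
        rw [h1]
      · intro k hk
        simp only
        rcases Nat.eq_zero_or_pos k with h | h
        · simp [h]
        · rw [if_neg (by omega)]
          exact (hzero k h (by omega)).symm

end Key

/-- The `n × n` upper triangular Toeplitz matrix built from the Taylor
coefficients of `f` at `0`. -/
noncomputable def Tn (n : ℕ) (f : ℂ → ℂ) : Matrix (Fin n) (Fin n) ℂ :=
  Matrix.of fun j k : Fin n =>
    if (j : ℕ) ≤ (k : ℕ) then iteratedDeriv ((k : ℕ) - (j : ℕ)) f 0 / ((k : ℕ) - (j : ℕ)).factorial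
    else 0

theorem stmt14 {n : ℕ} (a : ℕ → ℂ) (A : Matrix (Fin n) (Fin n) ℂ)
    (hA : A = Matrix.of fun j k : Fin n =>
      if (j : ℕ) ≤ (k : ℕ) then a ((k : ℕ) - (j : ℕ)) else 0)
    (hnorm : opN A ≤ 1) :
    ∃ f : ℂ → ℂ, DifferentiableOn ℂ f (Metric.ball 0 1) ∧
      (∀ z ∈ Metric.ball (0 : ℂ) 1, ‖f z‖ ≤ 1) ∧ A = Tn n f := by
  subst hA
  obtain ⟨f, c, hdiff, hbd, hHC, hco⟩ := key n a hnorm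
  refine ⟨f, hdiff, fun z hz => ?_, ?_⟩
  · exact hbd z hz
  · ext j k
    simp only [Tn, Matrix.of_apply]
    by_cases h : (j : ℕ) ≤ (k : ℕ)
    · rw [if_pos h, if_pos h, hHC.iteratedDeriv ((k : ℕ) - (j : ℕ)),
        hco ((k : ℕ) - (j : ℕ)) (by have := k.isLt; omega)]
      rw [mul_comm, mul_div_assoc, div_self (by
        exact_mod_cast Nat.cast_ne_zero.mpr (Nat.factorial_ne_zero _)), mul_one]
    · rw [if_neg h, if_neg h]
end

section
/- Let A be an n×n complex matrix with minimal polynomial of degree m, ‖A‖ ≤ 1, and 1 ∉ spec(A). Then dist(1, spec(A)) · ‖(I − A)⁻¹‖ ≤ 2m. -/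
set_option linter.unusedSectionVars false

open Complex Polynomial ContinuousLinearMap

noncomputable section

def Complex.abs : AbsoluteValue ℂ ℝ := NormedField.toAbsoluteValue ℂ

theorem Complex.norm_eq_abs (z : ℂ) : ‖z‖ = Complex.abs z := rfl

@[simp] theorem Complex.abs_conj (z : ℂ) : Complex.abs (starRingEnd ℂ z) = Complex.abs z :=
  Complex.norm_conj z

theorem Complex.abs_ofReal (r : ℝ) : Complex.abs (r : ℂ) = |r| := Complex.norm_real r

theorem Complex.sq_abs (z : ℂ) : Complex.abs z ^ 2 = Complex.normSq z := Complex.sq_norm z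

namespace Stmt15Aux

variable {H : Type*} [NormedAddCommGroup H] [InnerProductSpace ℂ H] [CompleteSpace H]

local notation "c'" => starRingEnd ℂ

/-- pointwise Blaschke inequality for a contraction -/
lemma ptwise (T : H →L[ℂ] H) (hT : ‖T‖ ≤ 1) (z : ℂ) (hz : Complex.abs z ≤ 1) (x : H) :
    ‖T x - z • x‖ ≤ ‖x - (c' z) • T x‖ := by
  have hTx : ‖T x‖ ≤ ‖x‖ := by
    calc ‖T x‖ ≤ ‖T‖ * ‖x‖ := T.le_opNorm x
    _ ≤ 1 * ‖x‖ := mul_le_mul_of_nonneg_right hT (norm_nonneg x)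
    _ = ‖x‖ := one_mul _
  have h1 : ‖T x - z • x‖ ^ 2 = ‖T x‖ ^ 2 - 2 * Complex.re (inner ℂ (T x) (z • x) : ℂ) + ‖z • x‖ ^ 2 :=
    norm_sub_sq (𝕜 := ℂ) _ _
  have h2 : ‖x - (c' z) • T x‖ ^ 2
      = ‖x‖ ^ 2 - 2 * Complex.re (inner ℂ x ((c' z) • T x) : ℂ) + ‖(c' z) • T x‖ ^ 2 :=
    norm_sub_sq (𝕜 := ℂ) _ _
  have hre : Complex.re (inner ℂ (T x) (z • x) : ℂ) = Complex.re (inner ℂ x ((c' z) • T x) : ℂ) := by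
    rw [inner_smul_right, inner_smul_right]
    have : (inner ℂ x (T x) : ℂ) = c' (inner ℂ (T x) x : ℂ) := (inner_conj_symm _ _).symm
    rw [this, ← map_mul]
    exact (Complex.conj_re _).symm
  have hzx : ‖z • x‖ = Complex.abs z * ‖x‖ := by rw [norm_smul]; rfl
  have hzTx : ‖(c' z) • T x‖ = Complex.abs z * ‖T x‖ := by
    rw [norm_smul]
    simp [Complex.norm_eq_abs]
  have hsq : ‖T x - z • x‖ ^ 2 ≤ ‖x - (c' z) • T x‖ ^ 2 := by
    rw [h1, h2, hre, hzx, hzTx]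
    have key : 0 ≤ (1 - Complex.abs z ^ 2) * (‖x‖ ^ 2 - ‖T x‖ ^ 2) := by
      apply mul_nonneg
      · nlinarith [Complex.abs.nonneg z]
      · nlinarith [norm_nonneg (T x), norm_nonneg x]
    nlinarith [key]
  nlinarith [norm_nonneg (T x - z • x), norm_nonneg (x - (c' z) • T x)]

variable (T : H →L[ℂ] H)

/-- the unit `1 - z̄ T` -/
lemma isUnit_u (hT : ‖T‖ ≤ 1) {z : ℂ} (hz : Complex.abs z < 1) :
    IsUnit ((1 : H →L[ℂ] H) - c' z • T) := by
  rcases eq_or_ne z 0 with rfl | hz0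
  · simpa using isUnit_one
  have h : ‖c' z • T‖ < 1 := by
    rw [norm_smul]
    have : ‖c' z‖ = Complex.abs z := by simp [Complex.norm_eq_abs]
    rw [this]
    calc Complex.abs z * ‖T‖ ≤ Complex.abs z * 1 :=
          mul_le_mul_of_nonneg_left hT (Complex.abs.nonneg z)
    _ < 1 := by simpa using hz
  exact ⟨Units.oneSub _ h, rfl⟩

lemma apply_inv_u (hu : IsUnit ((1 : H →L[ℂ] H) - c' z • T)) (y : H) :
    ((1 : H →L[ℂ] H) - c' z • T) (Ring.inverse ((1 : H →L[ℂ] H) - c' z • T) y) = y := by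
  have := Ring.mul_inverse_cancel _ hu
  calc ((1 : H →L[ℂ] H) - c' z • T) (Ring.inverse ((1 : H →L[ℂ] H) - c' z • T) y)
      = (((1 : H →L[ℂ] H) - c' z • T) * Ring.inverse ((1 : H →L[ℂ] H) - c' z • T)) y := rfl
  _ = y := by rw [this]; rfl

lemma norm_inv_u (hT : ‖T‖ ≤ 1) {z : ℂ} (hz : Complex.abs z < 1) :
    ‖(Ring.inverse ((1 : H →L[ℂ] H) - c' z • T))‖ ≤ (1 - Complex.abs z)⁻¹ := by
  have hu := isUnit_u T hT hz
  have h1z : (0:ℝ) < 1 - Complex.abs z := by linarith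
  apply ContinuousLinearMap.opNorm_le_bound _ (by positivity)
  intro y
  set x := Ring.inverse ((1 : H →L[ℂ] H) - c' z • T) y with hx
  have hxy : ((1 : H →L[ℂ] H) - c' z • T) x = y := apply_inv_u T hu y
  have hTx : ‖T x‖ ≤ ‖x‖ := by
    calc ‖T x‖ ≤ ‖T‖ * ‖x‖ := T.le_opNorm x
    _ ≤ 1 * ‖x‖ := mul_le_mul_of_nonneg_right hT (norm_nonneg x)
    _ = ‖x‖ := one_mul _
  have hlow : (1 - Complex.abs z) * ‖x‖ ≤ ‖y‖ := by
    have : y = x - c' z • T x := by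
      rw [← hxy]; simp [ContinuousLinearMap.sub_apply]
    rw [this]
    have h2 : ‖c' z • T x‖ = Complex.abs z * ‖T x‖ := by
      rw [norm_smul]; simp [Complex.norm_eq_abs]
    have := norm_sub_norm_le x (c' z • T x)
    have h3 : ‖x‖ - ‖c' z • T x‖ ≤ ‖x - c' z • T x‖ := norm_sub_norm_le _ _
    rw [h2] at h3
    nlinarith [Complex.abs.nonneg z, norm_nonneg x]
  rw [mul_comm]
  skip
  calc ‖x‖ = ((1 - Complex.abs z) * ‖x‖) * (1 - Complex.abs z)⁻¹ := by
        field_simp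
  _ ≤ ‖y‖ * (1 - Complex.abs z)⁻¹ := by
        apply mul_le_mul_of_nonneg_right hlow (by positivity)

lemma blaschke_norm (hT : ‖T‖ ≤ 1) {z : ℂ} (hz : Complex.abs z < 1) :
    ‖(T - z • (1 : H →L[ℂ] H)) * Ring.inverse ((1 : H →L[ℂ] H) - c' z • T)‖ ≤ 1 := by
  have hu := isUnit_u T hT hz
  apply ContinuousLinearMap.opNorm_le_bound _ zero_le_one
  intro y
  set x := Ring.inverse ((1 : H →L[ℂ] H) - c' z • T) y with hx
  have hxy : ((1 : H →L[ℂ] H) - c' z • T) x = y := apply_inv_u T hu y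
  have h1 : ((T - z • (1 : H →L[ℂ] H)) * Ring.inverse ((1 : H →L[ℂ] H) - c' z • T)) y
      = T x - z • x := by
    simp [ContinuousLinearMap.mul_apply, ← hx, ContinuousLinearMap.sub_apply]
  rw [h1, one_mul]
  calc ‖T x - z • x‖ ≤ ‖x - c' z • T x‖ := ptwise T hT z hz.le x
  _ = ‖y‖ := by rw [← hxy]; simp [ContinuousLinearMap.sub_apply]


lemma commute_ringInverse {A : Type*} [MonoidWithZero A] {a u : A} (hu : IsUnit u)
    (h : Commute a u) : Commute a (Ring.inverse u) := by
  obtain ⟨v, rfl⟩ := hu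
  rw [Ring.inverse_unit]
  exact h.units_inv_right

lemma commute_T_u {z : ℂ} : Commute T ((1 : H →L[ℂ] H) - c' z • T) :=
  (Commute.one_right T).sub_right ((Commute.refl T).smul_right (c' z))

lemma commute_oneSubT_u {z : ℂ} :
    Commute ((1 : H →L[ℂ] H) - T) ((1 : H →L[ℂ] H) - c' z • T) :=
  (Commute.one_left _).sub_left (commute_T_u T)

lemma key_id (hT : ‖T‖ ≤ 1) {z : ℂ} (hz : Complex.abs z < 1) :
    (1 : H →L[ℂ] H) - ((1 - c' z)/(1 - z)) • ((T - z • 1) * Ring.inverse (1 - c' z • T))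
      = ((1 - z * c' z)/(1 - z)) • (Ring.inverse ((1 : H →L[ℂ] H) - c' z • T) * (1 - T)) := by
  have hz1 : (1 : ℂ) - z ≠ 0 := by
    intro h
    have : z = 1 := by linear_combination -h
    rw [this] at hz; simp at hz
  obtain ⟨v, hv⟩ := isUnit_u T hT hz
  have hinv : Ring.inverse ((1 : H →L[ℂ] H) - c' z • T) = ↑v⁻¹ := by
    rw [← hv, Ring.inverse_unit]
  rw [hinv]
  rw [← Units.mul_left_inj v]
  have hcomm : ((1 : H →L[ℂ] H) - T) * ↑v = ↑v * ((1 : H →L[ℂ] H) - T) := by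
    rw [hv]; exact (commute_oneSubT_u T).eq
  have hvinv : ((↑v⁻¹ : H →L[ℂ] H) * ((1 : H →L[ℂ] H) - T)) * ↑v
      = (1 : H →L[ℂ] H) - T := by
    rw [mul_assoc, hcomm, ← mul_assoc, Units.inv_mul, one_mul]
  rw [sub_mul, one_mul, smul_mul_assoc, smul_mul_assoc, mul_assoc ((T - z • 1)), Units.inv_mul,
    mul_one, hvinv, hv]
  match_scalars <;> field_simp <;> ring


/-- The Blaschke-type contraction factor. -/
def Cfac (z : ℂ) : H →L[ℂ] H :=
  ((1 - c' z)/(1 - z)) • ((T - z • 1) * Ring.inverse ((1 : H →L[ℂ] H) - c' z • T))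

lemma one_sub_ne {z : ℂ} (hz : Complex.abs z < 1) : (1 : ℂ) - z ≠ 0 := by
  intro h
  have : z = 1 := by linear_combination -h
  rw [this] at hz; simp at hz

lemma norm_Cfac (hT : ‖T‖ ≤ 1) {z : ℂ} (hz : Complex.abs z < 1) : ‖Cfac T z‖ ≤ 1 := by
  rw [Cfac, norm_smul]
  have h1 : ‖(1 - c' z)/(1 - z)‖ = 1 := by
    have : (1 : ℂ) - c' z = c' (1 - z) := by rw [map_sub, map_one]
    rw [Complex.norm_eq_abs, map_div₀, this, Complex.abs_conj]
    exact div_self (by simpa using (Complex.abs.ne_zero (one_sub_ne hz)))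
  rw [h1, one_mul]
  exact blaschke_norm T hT hz

lemma key_id' (hT : ‖T‖ ≤ 1) {z : ℂ} (hz : Complex.abs z < 1) :
    (1 : H →L[ℂ] H) - Cfac T z
      = (((1 - z * c' z)/(1 - z)) • Ring.inverse ((1 : H →L[ℂ] H) - c' z • T)) * (1 - T) := by
  rw [Cfac, key_id T hT hz, smul_mul_assoc]

lemma norm_Dfac (hT : ‖T‖ ≤ 1) {z : ℂ} (hz : Complex.abs z < 1) {d : ℝ} (hd : 0 < d)
    (hdist : d ≤ Complex.abs (1 - z)) :
    ‖((1 - z * c' z)/(1 - z)) • Ring.inverse ((1 : H →L[ℂ] H) - c' z • T)‖ ≤ 2 / d := by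
  set a := Complex.abs z with ha
  have ha0 : 0 ≤ a := Complex.abs.nonneg z
  have hns : Complex.normSq z = a ^ 2 := by rw [ha, Complex.sq_abs]
  have hcast : (1 : ℂ) - z * c' z = ((1 - a ^ 2 : ℝ) : ℂ) := by
    rw [Complex.mul_conj, hns]
    push_cast
    ring
  have hnum : ‖(1 - z * c' z)/(1 - z)‖ = (1 - a ^ 2) / Complex.abs (1 - z) := by
    rw [Complex.norm_eq_abs, map_div₀, hcast, Complex.abs_ofReal]
    rw [_root_.abs_of_nonneg (by nlinarith : (0:ℝ) ≤ 1 - a ^ 2)]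
  rw [norm_smul, hnum]
  have hinv := norm_inv_u T hT hz
  calc (1 - a ^ 2) / Complex.abs (1 - z) * ‖Ring.inverse ((1 : H →L[ℂ] H) - c' z • T)‖
      ≤ (1 - a ^ 2) / Complex.abs (1 - z) * (1 - a)⁻¹ := by
        apply mul_le_mul_of_nonneg_left hinv
        apply div_nonneg (by nlinarith) (Complex.abs.nonneg _)
  _ = (1 + a) / Complex.abs (1 - z) := by
        have h1 : Complex.abs (1 - z) ≠ 0 := Complex.abs.ne_zero (one_sub_ne hz)
        have h2 : (1 : ℝ) - a ≠ 0 := by intro h; nlinarith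
        field_simp
        ring
  _ ≤ 2 / d := by
        apply div_le_div₀ (by norm_num) (by nlinarith) hd hdist

lemma telescope (hT : ‖T‖ ≤ 1) (d : ℝ) (hd : 0 < d) (l : List ℂ)
    (hsmall : ∀ z ∈ l, Complex.abs z < 1) (hdist : ∀ z ∈ l, d ≤ Complex.abs (1 - z)) :
    ∃ S : H →L[ℂ] H, Commute T S ∧ ‖S‖ ≤ 2 * l.length / d ∧
      1 - (l.map (fun z => Cfac T z)).prod = S * (1 - T) := by
  induction l with
  | nil =>
    refine ⟨0, Commute.zero_right T, by simp, by simp⟩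
  | cons z l ih =>
    have hz := hsmall z ((List.mem_cons_self))
    have hdz := hdist z ((List.mem_cons_self))
    obtain ⟨S', hc', hn', he'⟩ := ih (fun w hw => hsmall w (List.mem_cons_of_mem _ hw))
      (fun w hw => hdist w (List.mem_cons_of_mem _ hw))
    set D := ((1 - z * c' z)/(1 - z)) • Ring.inverse ((1 : H →L[ℂ] H) - c' z • T) with hD
    refine ⟨D + Cfac T z * S', ?_, ?_, ?_⟩
    · have h1 : Commute T D := by
        apply Commute.smul_right
        exact commute_ringInverse (isUnit_u T hT hz) (commute_T_u T)
      have h2 : Commute T (Cfac T z) := by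
        apply Commute.smul_right
        apply Commute.mul_right
        · exact (Commute.refl T).sub_right ((Commute.one_right T).smul_right z)
        · exact commute_ringInverse (isUnit_u T hT hz) (commute_T_u T)
      exact h1.add_right (h2.mul_right hc')
    · calc ‖D + Cfac T z * S'‖ ≤ ‖D‖ + ‖Cfac T z‖ * ‖S'‖ :=
            le_trans (norm_add_le _ _) (by gcongr; exact norm_mul_le _ _)
      _ ≤ 2 / d + 1 * (2 * l.length / d) := by
            gcongr
            · exact norm_Dfac T hT hz hd hdz
            · exact norm_Cfac T hT hz
      _ = 2 * (l.length + 1) / d := by field_simp; ring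
      _ = 2 * (z :: l).length / d := by norm_num
    · rw [List.map_cons, List.prod_cons]
      have : (1 : H →L[ℂ] H) - Cfac T z * (l.map (fun w => Cfac T w)).prod
          = (1 - Cfac T z) + Cfac T z * (1 - (l.map (fun w => Cfac T w)).prod) := by
        rw [mul_sub, mul_one]; abel
      rw [this, key_id' T hT hz, he', ← mul_assoc, add_mul, hD]

lemma prod_Cfac_factor (hT : ‖T‖ ≤ 1) (l : List ℂ)
    (hsmall : ∀ z ∈ l, Complex.abs z < 1) :
    (l.map (fun z => Cfac T z)).prod
      = (l.map (fun z => (1 - c' z)/(1 - z))).prod •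
        ((l.map (fun z => T - z • (1 : H →L[ℂ] H))).prod *
         (l.map (fun z => Ring.inverse ((1 : H →L[ℂ] H) - c' z • T))).prod) := by
  induction l with
  | nil => simp
  | cons z l ih =>
    have hz := hsmall z ((List.mem_cons_self))
    simp only [List.map_cons, List.prod_cons]
    rw [ih (fun w hw => hsmall w (List.mem_cons_of_mem _ hw))]
    have hcomm : Commute (Ring.inverse ((1 : H →L[ℂ] H) - c' z • T))
        ((l.map (fun w => T - w • (1 : H →L[ℂ] H))).prod) := by
      apply Commute.list_prod_right
      intro x hx
      obtain ⟨w, hw, rfl⟩ := List.mem_map.mp hx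
      exact (commute_ringInverse (isUnit_u T hT hz)
        ((commute_T_u T).sub_left ((Commute.one_left _).smul_left w))).symm
    rw [Cfac]
    rw [smul_mul_assoc, mul_smul_comm, smul_smul]
    congr 1
    rw [mul_assoc ((T - z • 1)), ← mul_assoc (Ring.inverse _), hcomm.eq,
      mul_assoc, ← mul_assoc, ← mul_assoc]

lemma prod_Cfac_eq_zero (hT : ‖T‖ ≤ 1) (l : List ℂ)
    (hsmall : ∀ z ∈ l, Complex.abs z < 1)
    (hprod : (l.map (fun z => T - z • (1 : H →L[ℂ] H))).prod = 0) :
    (l.map (fun z => Cfac T z)).prod = 0 := by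
  rw [prod_Cfac_factor T hT l hsmall, hprod, zero_mul, smul_zero]

lemma resolvent_bound (hT : ‖T‖ ≤ 1) (d : ℝ) (hd : 0 < d) (l : List ℂ)
    (hsmall : ∀ z ∈ l, Complex.abs z < 1) (hdist : ∀ z ∈ l, d ≤ Complex.abs (1 - z))
    (hprod : (l.map (fun z => T - z • (1 : H →L[ℂ] H))).prod = 0) :
    ∃ S : H →L[ℂ] H, S * (1 - T) = 1 ∧ (1 - T) * S = 1 ∧ ‖S‖ ≤ 2 * l.length / d := by
  obtain ⟨S, hc, hn, he⟩ := telescope T hT d hd l hsmall hdist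
  rw [prod_Cfac_eq_zero T hT l hsmall hprod, sub_zero] at he
  have hcomm : Commute ((1 : H →L[ℂ] H) - T) S := (Commute.one_left S).sub_left hc
  exact ⟨S, he.symm, hcomm.eq.trans he.symm, hn⟩


lemma root_mem_spectrum {B : Type*} [Ring B] [Algebra ℂ B] [Nontrivial B] (A : B)
    (hint : IsIntegral ℂ A) {z : ℂ} (hz : (minpoly ℂ A).IsRoot z) : z ∈ spectrum ℂ A := by
  by_contra h
  have hu : IsUnit (algebraMap ℂ B z - A) := spectrum.notMem_iff.mp h
  obtain ⟨q, hq⟩ := Polynomial.dvd_iff_isRoot.mpr hz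
  have hq0 : q ≠ 0 := by
    intro h0
    apply minpoly.ne_zero hint
    rw [hq, h0, mul_zero]
  have haq : Polynomial.aeval A q = 0 := by
    have h0 := minpoly.aeval ℂ A
    rw [hq, map_mul] at h0
    have hXz : Polynomial.aeval A (X - C z) = -(algebraMap ℂ B z - A) := by
      rw [map_sub, Polynomial.aeval_X, Polynomial.aeval_C, neg_sub]
    rw [hXz, neg_mul, neg_eq_zero] at h0
    exact hu.mul_left_cancel (h0.trans (mul_zero _).symm)
  have hle := minpoly.degree_le_of_ne_zero ℂ A hq0 haq
  have hnle := Polynomial.natDegree_le_natDegree hle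
  have hdeg : (minpoly ℂ A).natDegree = 1 + q.natDegree := by
    rw [hq, Polynomial.natDegree_mul (Polynomial.X_sub_C_ne_zero z) hq0,
      Polynomial.natDegree_X_sub_C]
  omega

lemma list_prod_smul {B : Type*} [Ring B] [Algebra ℂ B] (t : ℂ) (l : List B) :
    (l.map (fun x => t • x)).prod = t ^ l.length • l.prod := by
  induction l with
  | nil => simp
  | cons x l ih =>
    rw [List.map_cons, List.prod_cons, ih, smul_mul_assoc, mul_smul_comm, smul_smul,
      List.length_cons, List.prod_cons, pow_succ, mul_comm (t ^ l.length) t]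


lemma real_limit (d K mm : ℝ) (hd : 0 < d) (hK0 : 0 ≤ K) (hmm0 : 0 ≤ mm)
    (key : ∀ ε : ℝ, 0 < ε → ε ≤ 1 → ε < d → d * K ≤ 2 * mm + ε * (K * (1 + 2 * mm))) :
    d * K ≤ 2 * mm := by
  by_contra hlt
  push_neg at hlt
  set δ := d * K - 2 * mm with hδ
  have hδpos : 0 < δ := by simp only [hδ]; linarith
  have hKm : 0 < K * (1 + 2 * mm) + 1 := by positivity
  set ε := min (min 1 (d / 2)) (δ / (K * (1 + 2 * mm) + 1)) with hε
  have hεpos : 0 < ε := by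
    apply lt_min (lt_min one_pos (by linarith))
    positivity
  have hε1 : ε ≤ 1 := le_trans (min_le_left _ _) (min_le_left _ _)
  have hεd : ε < d := lt_of_le_of_lt (le_trans (min_le_left _ _) (min_le_right _ _)) (by linarith)
  have hbound := key ε hεpos hε1 hεd
  have hεδ : ε * (K * (1 + 2 * mm)) < δ := by
    have h5 : ε ≤ δ / (K * (1 + 2 * mm) + 1) := min_le_right _ _
    calc ε * (K * (1 + 2 * mm)) ≤ (δ / (K * (1 + 2 * mm) + 1)) * (K * (1 + 2 * mm)) := by
          apply mul_le_mul_of_nonneg_right h5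
          positivity
    _ < δ := by
          rw [div_mul_eq_mul_div, div_lt_iff₀ hKm]
          nlinarith [hδpos]
  simp only [hδ] at hεδ
  linarith

lemma final_bound (T R : H →L[ℂ] H) (hT : ‖T‖ ≤ 1) (d : ℝ) (hd : 0 < d) (l : List ℂ)
    (habs : ∀ z ∈ l, Complex.abs z ≤ 1) (hdistl : ∀ z ∈ l, d ≤ Complex.abs (1 - z))
    (hprodT : (l.map (fun z => T - z • (1 : H →L[ℂ] H))).prod = 0)
    (hR1 : ((1 : H →L[ℂ] H) - T) * R = 1) :
    d * ‖R‖ ≤ 2 * l.length := by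
  set K := ‖R‖ with hK
  have hK0 : 0 ≤ K := norm_nonneg _
  set mm : ℝ := (l.length : ℝ) with hmm
  have hmm0 : 0 ≤ mm := by positivity
  have key : ∀ ε : ℝ, 0 < ε → ε ≤ 1 → ε < d →
      d * K ≤ 2 * mm + ε * (K * (1 + 2 * mm)) := by
    intro ε hε0 hε1 hεd
    set t : ℂ := ((1 - ε : ℝ) : ℂ) with ht
    have habs_t : Complex.abs t = 1 - ε := by
      rw [ht, Complex.abs_ofReal]; exact _root_.abs_of_nonneg (by linarith)
    have h1t : (1 : ℂ) - t = ((ε : ℝ) : ℂ) := by rw [ht]; push_cast; ring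
    have habs_1t : Complex.abs (1 - t) = ε := by
      rw [h1t, Complex.abs_ofReal]; exact _root_.abs_of_nonneg hε0.le
    have habs_t1 : Complex.abs (t - 1) = ε := by rw [Complex.abs.map_sub, habs_1t]
    set T' := t • T with hT'
    have hT'1 : ‖T'‖ ≤ 1 := by
      rw [hT', norm_smul]
      have h2 : ‖t‖ = 1 - ε := habs_t
      rw [h2]
      nlinarith [norm_nonneg T]
    set l' := l.map (fun z => t * z) with hl'
    have hsmall' : ∀ w ∈ l', Complex.abs w < 1 := by
      intro w hw
      obtain ⟨z, hz, rfl⟩ := List.mem_map.mp hw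
      rw [map_mul, habs_t]
      have := habs z hz
      nlinarith [Complex.abs.nonneg z]
    have hdist' : ∀ w ∈ l', d - ε ≤ Complex.abs (1 - w) := by
      intro w hw
      obtain ⟨z, hz, rfl⟩ := List.mem_map.mp hw
      have h1z := hdistl z hz
      have htri : Complex.abs (1 - z) ≤ Complex.abs (1 - t * z) + Complex.abs (t * z - z) := by
        have h2 := Complex.abs.add_le (1 - t * z) (t * z - z)
        have h3 : (1 - t * z) + (t * z - z) = 1 - z := by ring
        rwa [h3] at h2
      have habs2 : Complex.abs (t * z - z) ≤ ε := by
        have h4 : t * z - z = (t - 1) * z := by ring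
        rw [h4, map_mul, habs_t1]
        have := habs z hz
        nlinarith [Complex.abs.nonneg z]
      linarith
    have hprod' : (l'.map (fun w => T' - w • 1)).prod = 0 := by
      rw [hl', List.map_map]
      have hfun : ((fun w => T' - w • (1 : H →L[ℂ] H))
          ∘ fun z => t * z) = fun z => t • (T - z • 1) := by
        funext z
        simp only [Function.comp_apply, hT', smul_sub, smul_smul]
      rw [hfun]
      have h5 : (l.map fun z => t • (T - z • 1))
          = ((l.map fun z => T - z • 1).map fun x => t • x) := by
        rw [List.map_map]; rfl
      rw [h5, list_prod_smul, hprodT, smul_zero]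
    obtain ⟨S, hS1, hS2, hSn⟩ := resolvent_bound T' hT'1 (d - ε) (by linarith) l'
      hsmall' hdist' hprod'
    have hlen' : (l'.length : ℝ) = mm := by rw [hl', List.length_map, hmm]
    rw [hlen'] at hSn
    have hexp : R = S + S * (((1 - t) • T) * R) := by
      have e1 : (1 : H →L[ℂ] H) - T' = (1 - T) + (1 - t) • T := by
        rw [hT', sub_smul, one_smul]; abel
      calc R = 1 * R := (one_mul R).symm
      _ = (S * (1 - T')) * R := by rw [hS1]
      _ = S * ((1 - T') * R) := mul_assoc _ _ _
      _ = S * (((1 - T) + (1 - t) • T) * R) := by rw [← e1]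
      _ = S * ((1 - T) * R + ((1 - t) • T) * R) := by rw [add_mul]
      _ = S * (1 + ((1 - t) • T) * R) := by rw [hR1]
      _ = S + S * (((1 - t) • T) * R) := by rw [mul_add, mul_one]
    have hsmallT : ‖(1 - t) • T‖ ≤ ε := by
      rw [norm_smul]
      have h3 : ‖(1:ℂ) - t‖ = ε := habs_1t
      rw [h3]
      nlinarith [norm_nonneg T]
    have h2 : ‖S * (((1 - t) • T) * R)‖ ≤ ‖S‖ * (ε * K) := by
      calc ‖S * (((1 - t) • T) * R)‖ ≤ ‖S‖ * ‖((1 - t) • T) * R‖ := norm_mul_le _ _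
      _ ≤ ‖S‖ * (‖(1 - t) • T‖ * ‖R‖) :=
          mul_le_mul_of_nonneg_left (norm_mul_le _ _) (norm_nonneg S)
      _ ≤ ‖S‖ * (ε * K) := by
          apply mul_le_mul_of_nonneg_left _ (norm_nonneg S)
          exact mul_le_mul_of_nonneg_right hsmallT (norm_nonneg R)
    have hnorm : K ≤ (2 * mm / (d - ε)) * (1 + ε * K) := by
      have h6 : K ≤ ‖S‖ + ‖S * (((1 - t) • T) * R)‖ := by
        rw [hK]
        calc ‖R‖ = ‖S + S * (((1 - t) • T) * R)‖ := by rw [← hexp]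
        _ ≤ _ := norm_add_le _ _
      have h7 : K ≤ ‖S‖ * (1 + ε * K) := by nlinarith [norm_nonneg S]
      calc K ≤ ‖S‖ * (1 + ε * K) := h7
      _ ≤ (2 * mm / (d - ε)) * (1 + ε * K) := by
          apply mul_le_mul_of_nonneg_right hSn
          nlinarith
    have hd' : 0 < d - ε := by linarith
    have hfinal : K * (d - ε) ≤ 2 * mm * (1 + ε * K) := by
      rw [div_mul_eq_mul_div, le_div_iff₀ hd'] at hnorm
      linarith
    calc d * K = K * (d - ε) + K * ε := by ring
    _ ≤ 2 * mm * (1 + ε * K) + K * ε := by linarith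
    _ = 2 * mm + ε * (K * (1 + 2 * mm)) := by ring
  exact real_limit d K mm hd hK0 hmm0 key

end Stmt15Aux
open Stmt15Aux

theorem stmt15 {n : ℕ} (A : Matrix (Fin n) (Fin n) ℂ) (m : ℕ)
    (hm : (minpoly ℂ A).natDegree = m)
    (hA : opN A ≤ 1) (h1 : (1 : ℂ) ∉ spectrum ℂ A) :
    Metric.infDist 1 (spectrum ℂ A) * opN (1 - A)⁻¹ ≤ 2 * m := by
  classical
  rcases Set.eq_empty_or_nonempty (spectrum ℂ A) with hσ | hne
  · rw [hσ, Metric.infDist_empty, zero_mul]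
    positivity
  haveI hnt : Nontrivial (Matrix (Fin n) (Fin n) ℂ) := by
    by_contra h
    rw [not_nontrivial_iff_subsingleton] at h
    obtain ⟨z, hz⟩ := hne
    exact (spectrum.mem_iff.mp hz) (isUnit_of_subsingleton _)
  haveI : NeZero n := by
    constructor
    rintro rfl
    exact not_subsingleton (Matrix (Fin 0) (Fin 0) ℂ) ⟨fun a b => Matrix.ext (fun (i : Fin 0) _ => Fin.elim0 i)⟩
  haveI : Nontrivial (EuclideanSpace ℂ (Fin n)) := by infer_instance
  set e := Matrix.toEuclideanCLM (𝕜 := ℂ) (n := Fin n) with he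
  set T := e A with hT
  have hσT : spectrum ℂ T = spectrum ℂ A := AlgEquiv.spectrum_eq e A
  have hT1 : ‖T‖ ≤ 1 := hA
  set d := Metric.infDist 1 (spectrum ℂ A) with hd
  have hclosed : IsClosed (spectrum ℂ A) := hσT ▸ spectrum.isClosed T
  have hdpos : 0 < d := (hclosed.notMem_iff_infDist_pos hne).mp h1
  have hint : IsIntegral ℂ A := isIntegral_of_noetherian (IsNoetherian.iff_fg.2 inferInstance) A
  have hmon := minpoly.monic hint
  have hsplits := IsAlgClosed.splits (k := ℂ) (minpoly ℂ A)
  set l := (minpoly ℂ A).roots.toList with hl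
  have hcard : (minpoly ℂ A).roots.card = m := by
    rw [Polynomial.splits_iff_card_roots.mp hsplits, hm]
  have hlen : l.length = m := by rw [hl, Multiset.length_toList, hcard]
  have hmem : ∀ z ∈ l, z ∈ spectrum ℂ A := fun z hz =>
    root_mem_spectrum A hint (Polynomial.isRoot_of_mem_roots (by rwa [← Multiset.mem_toList]))
  have habs : ∀ z ∈ l, Complex.abs z ≤ 1 := by
    intro z hz
    have hzT : z ∈ spectrum ℂ T := hσT ▸ hmem z hz
    have h2 := spectrum.norm_le_norm_of_mem hzT
    calc Complex.abs z = ‖z‖ := rfl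
    _ ≤ ‖T‖ := h2
    _ ≤ 1 := hT1
  have hdistl : ∀ z ∈ l, d ≤ Complex.abs (1 - z) := by
    intro z hz
    have h2 : Metric.infDist (1:ℂ) (spectrum ℂ A) ≤ dist 1 z :=
      Metric.infDist_le_dist_of_mem (hmem z hz)
    rw [Complex.dist_eq] at h2
    exact h2
  have hprodA : (l.map (fun z => A - z • 1)).prod = 0 := by
    have h0 := minpoly.aeval ℂ A
    rw [hsplits.eq_prod_roots_of_monic hmon,
      ← Multiset.coe_toList (minpoly ℂ A).roots, Multiset.map_coe, Multiset.prod_coe, ← hl,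
      map_list_prod, List.map_map] at h0
    have hfun : ((Polynomial.aeval A : ℂ[X] →ₐ[ℂ] _) ∘ fun z => Polynomial.X - Polynomial.C z)
        = fun z => A - z • 1 := by
      funext z
      simp only [Function.comp_apply, map_sub, Polynomial.aeval_X, Polynomial.aeval_C,
        Algebra.algebraMap_eq_smul_one]
    rwa [hfun] at h0
  have hprodT : (l.map (fun z => T - z • 1)).prod = 0 := by
    have h0 := congrArg e hprodA
    rw [map_zero, map_list_prod, List.map_map] at h0
    have hfun : (⇑e ∘ fun z => A - z • 1) = fun (z : ℂ) => T - z • 1 := by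
      funext z
      simp only [Function.comp_apply, map_sub, map_smul, map_one, hT]
    rwa [hfun] at h0
  have hu1 : IsUnit ((1 : Matrix (Fin n) (Fin n) ℂ) - A) := by
    have := spectrum.notMem_iff.mp h1
    rwa [map_one] at this
  have hudet := (Matrix.isUnit_iff_isUnit_det _).mp hu1
  set R := e ((1 - A)⁻¹) with hR
  have hR1 : (1 - T) * R = 1 := by
    have h0 := congrArg e (Matrix.mul_nonsing_inv _ hudet)
    simp only [map_mul, map_sub, map_one] at h0
    exact h0
  have hopn : opN (1 - A)⁻¹ = ‖R‖ := rfl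
  rw [hopn]
  have hres := final_bound T R hT1 d hdpos l habs hdistl hprodT hR1
  rw [hlen] at hres
  exact hres
end
end
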